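/- arXiv:2206.11244 — 9 statements merged into one kernel-verified Lean document; each statement's English description precedes it below -/
import Mathlib

section
/- Let C be a category admitting all filtered colimits and let F : C ⥤ Set be a functor preserving filtered colimits. If (c, x) is a compact object of the category of elements ∫F, then c is a compact object of C (i.e. the projection π : ∫F → C preserves compact objects). -/
open CategoryTheory CategoryTheory.Limits Opposite

universe v u

namespace ElementsCompactAux

variable {C : Type u} [Category.{v} C] (F : C ⥤ Type v)
variable {J : Type v} [Category.{v} J] (D : J ⥤ C) (t : Cocone D)
variable (j : J) (yj : F.obj (D.obj j))

/-- The diagram in the category of elements over the coslice `Under j`,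
sending `(g : j ⟶ k)` to `(D k, F(D g)(yj))`. -/
@[simps]
def diag : Under j ⥤ F.Elements where
  obj u := F.elementsMk (D.obj u.right) (F.map (D.map u.hom) yj)
  map {u v} m := ⟨D.map m.right, by
    dsimp
    rw [← FunctorToTypes.map_comp_apply, ← D.map_comp, Under.w m]⟩
  map_id u := by ext; simp
  map_comp f g := by ext; simp

/-- The natural cocone over `diag` with point `(t.pt, F(t.ι j)(yj))`. -/
@[simps]
def diagCocone : Cocone (diag F D j yj) where
  pt := F.elementsMk t.pt (F.map (t.ι.app j) yj)
  ι :=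
    { app := fun u => ⟨t.ι.app u.right, by
        show F.map (t.ι.app u.right) (F.map (D.map u.hom) yj) = F.map (t.ι.app j) yj
        rw [← FunctorToTypes.map_comp_apply]
        exact congrArg (fun g => F.map g yj) (t.w u.hom)⟩
      naturality := fun u v m => by
        ext
        simp [t.w m.right]
        exact t.w m.right }

/-- Forgetting a cocone over `diag` down to a cocone over `Under.forget j ⋙ D`. -/
@[simps]
def mapped (s : Cocone (diag F D j yj)) : Cocone (Under.forget j ⋙ D) where
  pt := s.pt.1
  ι :=
    { app := fun u => (s.ι.app u).val
      naturality := fun u v m => by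
        have h := congrArg Subtype.val (s.w m)
        dsimp at h ⊢
        exact h.trans (Category.comp_id _).symm }

variable {t} in
/-- The cocone `diagCocone` is a colimit as soon as `t` is. -/
noncomputable def diagCoconeIsColimit (ht : IsColimit t) [IsFiltered J] :
    IsColimit (diagCocone F D t j yj) := by
  have ht' : IsColimit (t.whisker (Under.forget j)) :=
    (Functor.Final.isColimitWhiskerEquiv (Under.forget j) t).symm ht
  refine
    { desc := fun s => ⟨ht'.desc (mapped F D j yj s), ?_⟩
      fac := fun s u => ?_
      uniq := fun s m hm => ?_ }
  · have h1 : t.ι.app j ≫ ht'.desc (mapped F D j yj s) = (s.ι.app (Under.mk (𝟙 j))).val :=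
      ht'.fac (mapped F D j yj s) (Under.mk (𝟙 j))
    have h2 := (s.ι.app (Under.mk (𝟙 j))).property
    replace h2 : F.map (s.ι.app (Under.mk (𝟙 j))).val (F.map (D.map (𝟙 j)) yj) = s.pt.2 := h2
    change F.map _ (F.map (t.ι.app j) yj) = s.pt.2
    refine Eq.trans ?_ h2
    exact (FunctorToTypes.map_comp_apply (F := F) (f := t.ι.app j) (a := yj) _).symm.trans
      ((congrArg (fun g => F.map g yj) h1).trans (by simp; rfl))
  · ext
    exact ht'.fac (mapped F D j yj s) u
  · ext
    refine ht'.uniq (mapped F D j yj s) m.val fun u => ?_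
    exact congrArg Subtype.val (hm u)

end ElementsCompactAux

open ElementsCompactAux in
/-- If `C` has filtered colimits and `F : C ⥤ Type` preserves them, then the projection
`π : ∫F ⥤ C` from the category of elements preserves compact objects: if `(c, x)` is
compact in `∫F` then `c` is compact in `C`. Here an object `X` is *compact* if
`Hom(X, -)` preserves filtered colimits. -/
theorem elements_pi_preserves_compact
    {C : Type u} [Category.{v} C] [HasFilteredColimits C]
    (F : C ⥤ Type v) [PreservesFilteredColimits F]
    (c : C) (x : F.obj c)
    [PreservesFilteredColimits (coyoneda.obj (op (F.elementsMk c x)))] :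
    PreservesFilteredColimits (coyoneda.obj (op c)) := by
  constructor
  intro J _ _
  constructor
  intro D
  constructor
  intro t ht
  constructor
  apply Types.FilteredColimit.isColimitOf
  · -- surjectivity
    intro f
    dsimp at f
    -- f : c ⟶ t.pt
    obtain ⟨j, yj, hy⟩ := Types.jointly_surjective_of_isColimit
      (isColimitOfPreserves F ht) (F.map f x)
    -- hy : F.map (t.ι.app j) yj = F.map f x
    have hsE := diagCoconeIsColimit F D j yj ht
    have hmap := isColimitOfPreserves (coyoneda.obj (op (F.elementsMk c x))) hsE
    obtain ⟨u, ψ, hψ⟩ := Types.jointly_surjective_of_isColimit hmap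
      (⟨f, hy.symm⟩ : F.elementsMk c x ⟶ (diagCocone F D t j yj).pt)
    exact ⟨u.right, ψ.val, (congrArg Subtype.val hψ).symm⟩
  · -- injectivity
    intro i i' fi fi' hf
    dsimp at fi fi' hf
    obtain ⟨k₀, ui, ui', -⟩ := IsFilteredOrEmpty.cocone_objs i i'
    have hcomp : (fi ≫ D.map ui) ≫ t.ι.app k₀ = (fi' ≫ D.map ui') ≫ t.ι.app k₀ := by
      rw [Category.assoc, Category.assoc, t.w ui, t.w ui', hf]
    have heq : (F.mapCocone t).ι.app k₀ (F.map (fi ≫ D.map ui) x) =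
        (F.mapCocone t).ι.app k₀ (F.map (fi' ≫ D.map ui') x) := by
      dsimp
      rw [← FunctorToTypes.map_comp_apply, ← FunctorToTypes.map_comp_apply, hcomp]
    rw [Types.FilteredColimit.isColimit_eq_iff (D ⋙ F) (isColimitOfPreserves F ht)] at heq
    obtain ⟨k₁, a, b, hab⟩ := heq
    obtain ⟨k₂, e, he⟩ := IsFilteredOrEmpty.cocone_maps a b
    have hgg' : F.map (fi' ≫ D.map (ui' ≫ a ≫ e)) x = F.map (fi ≫ D.map (ui ≫ a ≫ e)) x :=
      calc F.map (fi' ≫ D.map (ui' ≫ a ≫ e)) x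
          = F.map (D.map e) ((D ⋙ F).map b (F.map (fi' ≫ D.map ui') x)) := by
            rw [he]
            simp [FunctorToTypes.map_comp_apply]
        _ = F.map (D.map e) ((D ⋙ F).map a (F.map (fi ≫ D.map ui) x)) := by rw [hab]
        _ = F.map (fi ≫ D.map (ui ≫ a ≫ e)) x := by
            simp [FunctorToTypes.map_comp_apply]
    have hgcomp : (fi ≫ D.map (ui ≫ a ≫ e)) ≫ t.ι.app k₂ =
        (fi' ≫ D.map (ui' ≫ a ≫ e)) ≫ t.ι.app k₂ := by
      rw [Category.assoc, Category.assoc, t.w (ui ≫ a ≫ e), t.w (ui' ≫ a ≫ e), hf]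
    -- use compactness of (c, x) on the coslice diagram at k₂
    have hmap := isColimitOfPreserves (coyoneda.obj (op (F.elementsMk c x)))
      (diagCoconeIsColimit F D k₂ (F.map (fi ≫ D.map (ui ≫ a ≫ e)) x) ht)
    have hψψ' :
        ((coyoneda.obj (op (F.elementsMk c x))).mapCocone
            (diagCocone F D t k₂ (F.map (fi ≫ D.map (ui ≫ a ≫ e)) x))).ι.app (Under.mk (𝟙 k₂))
          (⟨fi ≫ D.map (ui ≫ a ≫ e), by
              show F.map _ x = F.map (D.map (𝟙 k₂)) (F.map _ x); rw [D.map_id, F.map_id]; rfl⟩ :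
            F.elementsMk c x ⟶
              (diag F D k₂ (F.map (fi ≫ D.map (ui ≫ a ≫ e)) x)).obj (Under.mk (𝟙 k₂))) =
        ((coyoneda.obj (op (F.elementsMk c x))).mapCocone
            (diagCocone F D t k₂ (F.map (fi ≫ D.map (ui ≫ a ≫ e)) x))).ι.app (Under.mk (𝟙 k₂))
          (⟨fi' ≫ D.map (ui' ≫ a ≫ e), by
              show F.map _ x = F.map (D.map (𝟙 k₂)) (F.map _ x); rw [D.map_id, F.map_id]; exact hgg'⟩ :
            F.elementsMk c x ⟶
              (diag F D k₂ (F.map (fi ≫ D.map (ui ≫ a ≫ e)) x)).obj (Under.mk (𝟙 k₂))) :=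
      Subtype.ext hgcomp
    rw [Types.FilteredColimit.isColimit_eq_iff _ hmap] at hψψ'
    obtain ⟨u, m, m', hmm'⟩ := hψψ'
    have hmr : m.right = u.hom := by simpa using Under.w m
    have hm'r : m'.right = u.hom := by simpa using Under.w m'
    have hval : (fi ≫ D.map (ui ≫ a ≫ e)) ≫ D.map m.right =
        (fi' ≫ D.map (ui' ≫ a ≫ e)) ≫ D.map m'.right := congrArg Subtype.val hmm'
    rw [hmr, hm'r] at hval
    refine ⟨u.right, (ui ≫ a ≫ e) ≫ u.hom, (ui' ≫ a ≫ e) ≫ u.hom, ?_⟩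
    show fi ≫ D.map ((ui ≫ a ≫ e) ≫ u.hom) = fi' ≫ D.map ((ui' ≫ a ≫ e) ≫ u.hom)
    simpa only [Functor.map_comp, Category.assoc] using hval
end

section
/- Let C be a category admitting all filtered colimits and let F : C ⥤ Set be a functor preserving filtered colimits. If c is a compact object of C, then for every element x ∈ F(c) the pair (c, x) is a compact object of the category of elements ∫F (i.e. the projection π : ∫F → C reflects compact objects). -/
open CategoryTheory CategoryTheory.Limits Opposite

universe v u

/-- If `C` has filtered colimits and `F : C ⥤ Type` preserves them, then the projection
`π : ∫F ⥤ C` from the category of elements reflects compact objects: if `c` is compact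
in `C`, then for every `x ∈ F(c)` the pair `(c, x)` is compact in `∫F`. Here an object
`X` is *compact* if `Hom(X, -)` preserves filtered colimits. -/
theorem elements_pi_reflects_compact
    {C : Type u} [Category.{v} C] [HasFilteredColimits C]
    (F : C ⥤ Type v) [PreservesFilteredColimits F]
    (c : C) [PreservesFilteredColimits (coyoneda.obj (op c))] (x : F.obj c) :
    PreservesFilteredColimits (coyoneda.obj (op (F.elementsMk c x))) := by
  constructor
  intro J _ _
  constructor
  intro D
  -- The underlying diagram in `C`.
  set K : J ⥤ C := D ⋙ CategoryOfElements.π F with hK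
  let cC := colimit.cocone K
  have hC : IsColimit cC := colimit.isColimit K
  have hFC : IsColimit (F.mapCocone cC) := isColimitOfPreserves F hC
  have hCoyo : IsColimit ((coyoneda.obj (op c)).mapCocone cC) :=
    isColimitOfPreserves (coyoneda.obj (op c)) hC
  obtain ⟨j0⟩ : Nonempty J := IsFiltered.nonempty
  -- The induced element of `F (colimit K)`.
  let xinf : F.obj (colimit K) := F.map (cC.ι.app j0) (D.obj j0).2
  have hx : ∀ j : J, F.map (cC.ι.app j) (D.obj j).2 = xinf := by
    intro j
    have key : ∀ (a b : J) (f : a ⟶ b),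
        F.map (cC.ι.app a) (D.obj a).2 = F.map (cC.ι.app b) (D.obj b).2 := by
      intro a b f
      have h1 : K.map f ≫ cC.ι.app b = cC.ι.app a := cC.w f
      have h2 : F.map (K.map f) (D.obj a).2 = (D.obj b).2 := (D.map f).property
      rw [← h1]; exact (FunctorToTypes.map_comp_apply F _ _ _).trans (congrArg _ h2)
    calc F.map (cC.ι.app j) (D.obj j).2
        = F.map (cC.ι.app (IsFiltered.max j j0)) (D.obj (IsFiltered.max j j0)).2 :=
          key _ _ (IsFiltered.leftToMax j j0)
      _ = xinf := (key _ _ (IsFiltered.rightToMax j j0)).symm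
  -- The lifted colimit cocone in `F.Elements`.
  let cE : Cocone D :=
    { pt := F.elementsMk (colimit K) xinf
      ι :=
        { app := fun j => ⟨cC.ι.app j, hx j⟩
          naturality := fun j j' f => CategoryOfElements.ext F _ _ (by
            show K.map f ≫ cC.ι.app j' = cC.ι.app j ≫ 𝟙 _
            rw [Category.comp_id]; exact cC.w f) } }
  have hE : IsColimit cE :=
    { desc := fun s =>
        ⟨hC.desc ((CategoryOfElements.π F).mapCocone s), by
          have h1 : cC.ι.app j0 ≫ hC.desc ((CategoryOfElements.π F).mapCocone s)
              = (s.ι.app j0).val := hC.fac _ j0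
          show F.map _ xinf = s.pt.2
          rw [show xinf = F.map (cC.ι.app j0) (D.obj j0).2 from rfl,
            ]
          exact (FunctorToTypes.map_comp_apply F _ _ _).symm.trans
            ((congrArg (fun m => F.map m (D.obj j0).2) h1).trans (s.ι.app j0).property)⟩
      fac := fun s j => CategoryOfElements.ext F _ _ (hC.fac ((CategoryOfElements.π F).mapCocone s) j)
      uniq := fun s m hm => CategoryOfElements.ext F _ _
        (hC.uniq ((CategoryOfElements.π F).mapCocone s) m.val fun j =>
          congrArg Subtype.val (hm j)) }
  apply preservesColimit_of_preserves_colimit_cocone hE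
  -- Now show the mapped cocone is a colimit of types.
  apply Types.FilteredColimit.isColimitOf
  · -- joint surjectivity
    intro g
    obtain ⟨j, h, hh⟩ := Types.jointly_surjective _ hCoyo g.val
    -- `hh : h ≫ cC.ι.app j = g.val`
    have hh' : h ≫ cC.ι.app j = g.val := hh
    have heq : F.map (cC.ι.app j) (F.map h x) = F.map (cC.ι.app j) (D.obj j).2 := by
      rw [← types_comp_apply (F.map h) (F.map _), ← F.map_comp, hh', g.property, hx j]
    obtain ⟨k, u, v, huv⟩ :=
      (Types.FilteredColimit.isColimit_eq_iff (K ⋙ F) hFC).mp heq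
    have hm : F.map (h ≫ K.map u) x = (D.obj k).2 := by
      have h2 : F.map (K.map v) (D.obj j).2 = (D.obj k).2 := (D.map v).property
      rw [F.map_comp, types_comp_apply]
      exact huv.trans h2
    refine ⟨k, ⟨h ≫ K.map u, hm⟩, ?_⟩
    apply CategoryOfElements.ext F
    show g.val = (h ≫ K.map u) ≫ cC.ι.app k
    rw [Category.assoc, cC.w u, hh']
  · -- eventual injectivity
    intro i j p q hpq
    have hpq' : p.val ≫ cC.ι.app i = q.val ≫ cC.ι.app j :=
      congrArg Subtype.val hpq
    obtain ⟨k, u, v, huv⟩ :=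
      (Types.FilteredColimit.isColimit_eq_iff (K ⋙ coyoneda.obj (op c)) hCoyo).mp hpq'
    refine ⟨k, u, v, ?_⟩
    apply CategoryOfElements.ext F
    exact huv
end

section
/- Let A be a commutative ring, I an ideal of A, and γ a divided power structure on I. Suppose there is a subset G ⊆ I consisting of nilpotent elements such that I is generated as an ideal by the set of elements γ_n(g) for g ∈ G and n ≥ 1 (i.e. I is PD-generated by nilpotent elements). Then I is a nil ideal: every element of I is nilpotent, i.e. I is contained in the nilradical of A. -/
/-- If the PD ideal `I` of a divided power ring `(A, I, γ)` is PD-generated by a set `G`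
of nilpotent elements — i.e. `I` is generated as an ideal by the elements `γ_n(g)` for
`g ∈ G`, `n ≥ 1` — then `I` is a nil ideal: every element of `I` is nilpotent. -/
theorem nilIdeal_of_pdGenerated_by_nilpotents
    {A : Type*} [CommRing A] {I : Ideal A} (γ : DividedPowers I)
    (G : Set A) (hGI : G ⊆ I) (hGnil : ∀ g ∈ G, IsNilpotent g)
    (hgen : I = Ideal.span {a | ∃ g ∈ G, ∃ n : ℕ, 1 ≤ n ∧ a = γ.dpow n g}) :
    I ≤ nilradical A := by
  intro a ha
  rw [mem_nilradical, nilpotent_iff_mem_prime]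
  intro P hP
  by_cases hchar : ∃ m : ℕ, 2 ≤ m ∧ (m : A) ∈ P
  · -- If some `m ≥ 2` vanishes in `A/P`, then every element of `I` lies in `P`,
    -- since `a ^ m = m! • γ_m(a)` and `m ∣ m!`.
    obtain ⟨m, hm2, hmP⟩ := hchar
    have hfac : ((m.factorial : ℕ) : A) * γ.dpow m a = a ^ m :=
      γ.factorial_mul_dpow_eq_pow (n := m) ha
    have hmem : a ^ m ∈ P := by
      rw [← hfac]
      have : ((m.factorial : ℕ) : A) ∈ P := by
        obtain ⟨k, hk⟩ : m ∣ m.factorial := Nat.dvd_factorial (by omega) le_rfl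
        rw [hk, Nat.cast_mul]
        exact Ideal.mul_mem_right _ _ hmP
      exact Ideal.mul_mem_right _ _ this
    exact hP.mem_of_pow_mem _ hmem
  · -- Otherwise no `m ≥ 2` vanishes in `A/P`; then each generator `γ_n(g)` lies in `P`
    -- because `n! • γ_n(g) = g ^ n ∈ P` (as `g` is nilpotent) and `n!` is a nonzerodivisor
    -- mod `P`.
    push_neg at hchar
    have key : I ≤ P := by
      rw [hgen]
      refine Ideal.span_le.mpr ?_
      rintro _ ⟨g, hg, n, hn1, rfl⟩
      have hgP : g ∈ P := nilradical_le_prime P (mem_nilradical.mpr (hGnil g hg))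
      have hfac : ((n.factorial : ℕ) : A) * γ.dpow n g = g ^ n :=
        γ.factorial_mul_dpow_eq_pow (n := n) (hGI hg)
      have hmem : ((n.factorial : ℕ) : A) * γ.dpow n g ∈ P := by
        rw [hfac]
        exact Ideal.pow_mem_of_mem P hgP n (by omega)
      rcases hP.mem_or_mem hmem with h | h
      · exfalso
        rcases Nat.lt_or_ge n.factorial 2 with hlt | hge
        · have h1 : n.factorial = 1 := by
            have := n.factorial_pos
            omega
          rw [h1] at h
          simp only [Nat.cast_one] at h
          exact hP.ne_top ((Ideal.eq_top_iff_one P).mpr h)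
        · exact hchar n.factorial hge h
      · exact h
    exact key ha
end

section
/- Let A be a commutative ring, I an ideal of A, γ a divided power structure on I, and let a ∈ I with a^e = 0 for some natural number e. Then for every n ≥ 1 and every natural number k with k ≥ ⌈e/n⌉·(n+1), one has (γ_n(a))^k = 0. In particular, γ_n(a) is nilpotent for every n ≥ 1. -/
/-- Auxiliary: the core vanishing statement for the exact exponent `q * (n+1)`
where `n * q ≥ e`. -/
theorem dpow_pow_aux
    {A : Type*} [CommRing A] {I : Ideal A} (γ : DividedPowers I)
    {a : A} (ha : a ∈ I) {e : ℕ} (hae : a ^ e = 0)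
    {n : ℕ} (hn : 1 ≤ n) {q : ℕ} (hen : e ≤ n * q) :
    γ.dpow n a ^ (q * (n + 1)) = 0 := by
  have hn0 : n ≠ 0 := Nat.one_le_iff_ne_zero.mp hn
  set k₀ := q * (n + 1) with hk₀
  set N := k₀ * n with hN
  set M := Nat.multinomial (Finset.range k₀) (fun _ => n) with hM
  -- (γ.dpow n a) ^ k₀ = M * γ.dpow N a
  have hprod := γ.prod_dpow (s := Finset.range k₀) (n := fun _ => n) ha
  rw [Finset.prod_const, Finset.sum_const, Finset.card_range, smul_eq_mul] at hprod
  -- factorial identity for M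
  have hMspec : (n.factorial ^ k₀) * M = N.factorial := by
    have := Nat.multinomial_spec (Finset.range k₀) (fun _ => n)
    simpa [Finset.prod_const, Finset.sum_const, Finset.card_range, smul_eq_mul] using this
  -- divisibility : n!^k₀ ∣ (n*q*n)!
  have hd1 : n.factorial ^ q ∣ (q*n).factorial :=
    ⟨Nat.uniformBell q n * q.factorial, by rw [← Nat.uniformBell_mul_eq q hn0]; ring⟩
  have hd2 : n.factorial ^ (n * q) * (n*q).factorial ∣ (n*q*n).factorial :=
    ⟨Nat.uniformBell (n * q) n, by rw [← Nat.uniformBell_mul_eq (n * q) hn0]; ring⟩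
  have hd : n.factorial ^ k₀ ∣ (n*q*n).factorial := by
    have h1 : n.factorial ^ k₀ = n.factorial ^ (n * q) * n.factorial ^ q := by
      rw [← pow_add]; congr 1; rw [hk₀]; ring
    rw [h1]
    refine dvd_trans ?_ hd2
    exact mul_dvd_mul_left _ (by rwa [mul_comm n q])
  obtain ⟨c, hc⟩ := hd
  -- split N
  have hNeq : N = n * q + n * q * n := by rw [hN, hk₀]; ring
  have hle : n * q ≤ N := by rw [hNeq]; exact Nat.le_add_right _ _
  have hchoose : N.choose (n * q) * (n*q).factorial * (N - n*q).factorial = N.factorial :=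
    Nat.choose_mul_factorial_mul_factorial hle
  have hsub : N - n * q = n * q * n := by rw [hNeq]; omega
  rw [hsub, hc] at hchoose
  -- cancel n!^k₀
  have hMeq : M = N.choose (n * q) * (n*q).factorial * c := by
    have hpos : 0 < n.factorial ^ k₀ := Nat.pow_pos (n.factorial_pos)
    apply Nat.eq_of_mul_eq_mul_left hpos
    rw [hMspec, ← hchoose]; ring
  -- now compute in A
  have hmul := γ.mul_dpow (m := n * q) (n := n * q * n) ha
  rw [← hNeq] at hmul
  have hfac : ((n*q).factorial : A) * γ.dpow (n * q) a = a ^ (n * q) :=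
    γ.factorial_mul_dpow_eq_pow (n := n * q) ha
  have hpowz : a ^ (n * q) = 0 := by
    rw [← Nat.add_sub_cancel' hen, pow_add, hae, zero_mul]
  calc γ.dpow n a ^ k₀ = (M : A) * γ.dpow N a := hprod
    _ = (c : A) * (((N.choose (n * q) : A)) * γ.dpow N a) * ((n*q).factorial : A) := by
        rw [hMeq]; push_cast; ring
    _ = (c : A) * (γ.dpow (n * q) a * γ.dpow (n * q * n) a) * ((n*q).factorial : A) := by
        rw [hmul]
    _ = (c : A) * γ.dpow (n * q * n) a * (((n*q).factorial : A) * γ.dpow (n * q) a) := by ring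
    _ = 0 := by rw [hfac, hpowz, mul_zero]

/-- Let `γ` be a divided power structure on an ideal `I` of a commutative ring `A`, and let
`a ∈ I` with `a ^ e = 0`.  Then for every `n ≥ 1` and every `k ≥ ⌈e/n⌉ * (n + 1)` one has
`(γ_n(a)) ^ k = 0`; in particular `γ_n(a)` is nilpotent for every `n ≥ 1`. -/
theorem dpow_pow_eq_zero_of_pow_eq_zero
    {A : Type*} [CommRing A] {I : Ideal A} (γ : DividedPowers I)
    {a : A} (ha : a ∈ I) {e : ℕ} (hae : a ^ e = 0) :
    (∀ n : ℕ, 1 ≤ n → ∀ k : ℕ,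
      ⌈(e : ℚ) / (n : ℚ)⌉ * ((n : ℤ) + 1) ≤ (k : ℤ) → γ.dpow n a ^ k = 0) ∧
    (∀ n : ℕ, 1 ≤ n → IsNilpotent (γ.dpow n a)) := by
  have main : ∀ n : ℕ, 1 ≤ n → ∀ k : ℕ,
      ⌈(e : ℚ) / (n : ℚ)⌉ * ((n : ℤ) + 1) ≤ (k : ℤ) → γ.dpow n a ^ k = 0 := by
    intro n hn k hk
    have hn0 : (0 : ℚ) < (n : ℚ) := by exact_mod_cast hn
    set q : ℕ := (⌈(e : ℚ) / (n : ℚ)⌉).toNat with hq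
    have hceil_nonneg : 0 ≤ ⌈(e : ℚ) / (n : ℚ)⌉ :=
      Int.ceil_nonneg (by positivity)
    have hqz : (q : ℤ) = ⌈(e : ℚ) / (n : ℚ)⌉ := Int.toNat_of_nonneg hceil_nonneg
    have hen : e ≤ n * q := by
      have h1 := Int.le_ceil ((e : ℚ) / (n : ℚ))
      rw [div_le_iff₀ hn0] at h1
      have h2 : (e : ℚ) ≤ ((n * q : ℕ) : ℚ) := by
        push_cast
        rw [← hqz] at h1
        push_cast at h1
        linarith
      exact_mod_cast h2
    have hk' : q * (n + 1) ≤ k := by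
      have h3 : ((q * (n + 1) : ℕ) : ℤ) ≤ (k : ℤ) := by
        push_cast
        rw [hqz]
        linarith
      exact_mod_cast h3
    have hzero : γ.dpow n a ^ (q * (n + 1)) = 0 := dpow_pow_aux γ ha hae hn hen
    calc γ.dpow n a ^ k
        = γ.dpow n a ^ (q * (n + 1)) * γ.dpow n a ^ (k - q * (n + 1)) := by
          rw [← pow_add, Nat.add_sub_cancel' hk']
      _ = 0 := by rw [hzero, zero_mul]
  refine ⟨main, fun n hn => ⟨(⌈(e : ℚ) / (n : ℚ)⌉).toNat * (n + 1), main n hn _ ?_⟩⟩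
  have hn0 : (0 : ℚ) < (n : ℚ) := by exact_mod_cast hn
  have hceil_nonneg : 0 ≤ ⌈(e : ℚ) / (n : ℚ)⌉ := Int.ceil_nonneg (by positivity)
  push_cast
  rw [Int.toNat_of_nonneg hceil_nonneg]
end

section
/- For all natural numbers n ≥ 1, e, and k with k ≥ ⌈e/n⌉·(n+1), one has k·n ≥ e and (n!)^k divides (k·n − e)! (so that (k·n − e)!/(n!)^k is an integer). -/
/-- For natural numbers `n ≥ 1`, `e` and `k` with `k ≥ ⌈e/n⌉ * (n + 1)`, one has
`k * n ≥ e` and `(n!)^k` divides `(k * n - e)!`. -/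
theorem factorial_pow_dvd_factorial_of_ceil_le
    (n e k : ℕ) (hn : 1 ≤ n)
    (hk : ⌈(e : ℚ) / (n : ℚ)⌉ * ((n : ℤ) + 1) ≤ (k : ℤ)) :
    e ≤ k * n ∧ (Nat.factorial n) ^ k ∣ Nat.factorial (k * n - e) := by
  have hn0 : (0:ℚ) < (n:ℚ) := by exact_mod_cast hn
  set c : ℕ := (⌈(e : ℚ) / (n : ℚ)⌉).toNat with hc
  have hcnn : (0:ℤ) ≤ ⌈(e : ℚ) / (n : ℚ)⌉ :=
    Int.ceil_nonneg (by positivity)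
  have hcz : (c : ℤ) = ⌈(e : ℚ) / (n : ℚ)⌉ := Int.toNat_of_nonneg hcnn
  -- e ≤ c * n
  have hec : e ≤ c * n := by
    have h1 : (e : ℚ) / (n : ℚ) ≤ (c : ℚ) := by
      have := Int.le_ceil ((e : ℚ) / (n : ℚ))
      rw [← hcz] at this
      exact_mod_cast this
    have h2 : (e : ℚ) ≤ (c : ℚ) * (n : ℚ) := by
      rw [div_le_iff₀ hn0] at h1; exact h1
    exact_mod_cast h2
  -- c * (n+1) ≤ k
  have hck : c * (n + 1) ≤ k := by
    have : (c : ℤ) * ((n : ℤ) + 1) ≤ (k : ℤ) := by rw [hcz]; exact hk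
    exact_mod_cast this
  have hcnk : c * n + c ≤ k := by nlinarith
  have hckle : c ≤ k := le_trans (Nat.le_add_left c (c * n)) hcnk
  set a : ℕ := k - c with ha
  have hka : k = a + c := by omega
  have hcna : c * n ≤ a := by omega
  constructor
  · calc e ≤ c * n := hec
      _ ≤ c * (n + 1) := by nlinarith
      _ ≤ k := hck
      _ ≤ k * n := Nat.le_mul_of_pos_right k hn
  · have han : a * n ≤ k * n - e := by
      have : a * n + e ≤ k * n := by
        have : a * n + c * n = k * n := by rw [hka]; ring
        omega
      omega
    have h1 : Nat.factorial n ^ a * Nat.factorial a ∣ Nat.factorial (a * n) :=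
      ⟨Nat.uniformBell a n, by rw [← Nat.uniformBell_mul_eq a (show n ≠ 0 by omega)]; ring⟩
    have h2 : Nat.factorial n ^ c ∣ Nat.factorial a := by
      have h3 : Nat.factorial n ^ c * Nat.factorial c ∣ Nat.factorial (c * n) :=
        ⟨Nat.uniformBell c n, by rw [← Nat.uniformBell_mul_eq c (show n ≠ 0 by omega)]; ring⟩
      exact dvd_trans (dvd_trans (dvd_mul_right _ _) h3)
        (Nat.factorial_dvd_factorial hcna)
    calc Nat.factorial n ^ k = Nat.factorial n ^ a * Nat.factorial n ^ c := by
          rw [hka, pow_add]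
      _ ∣ Nat.factorial n ^ a * Nat.factorial a := mul_dvd_mul_left _ h2
      _ ∣ Nat.factorial (a * n) := h1
      _ ∣ Nat.factorial (k * n - e) := Nat.factorial_dvd_factorial han
end

section
/- Let (C, J) be a small site, and let C' = WithTerminal C be the category obtained from C by freely adjoining a terminal object *. Then there is a Grothendieck topology J' on C' such that: (1) for every object c of C, a sieve on c in C' is J'-covering if and only if the sieve on c in C consisting of its morphisms from objects of C is J-covering; (2) the only J'-covering sieve on * is the maximal sieve. Moreover, for this topology J', the category of sheaves of sets on (C', J') is equivalent to the comma category (Set ↓ Γ), whose objects are triples (E, F, e) with E a set, F a sheaf of sets on (C, J), and e : E → Γ(F) a function, where Γ(F) denotes the set of global sections of F (the limit of F, i.e. the set of compatible families of elements of F over all objects of C). -/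
open CategoryTheory CategoryTheory.Limits

universe u

open WithTerminal Opposite

namespace SierpTest
variable {C : Type u} [SmallCategory C]

lemma fpb_top : (⊤ : Sieve (of (C := C) c)).functorPullback incl = ⊤ := rfl

lemma fpb_pullback {a b : C} (S : Sieve (of b)) (f : of a ⟶ of b) :
    (S.pullback f).functorPullback incl = (S.functorPullback incl).pullback (down f) := rfl

def auxJ (J : GrothendieckTopology C) : GrothendieckTopology (WithTerminal C) where
  sieves X := match X with
    | of c => {S | S.functorPullback incl ∈ J c}
    | WithTerminal.star => {S | S = ⊤}
  top_mem' X := by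
    match X with
    | of c => exact J.top_mem c
    | WithTerminal.star => rfl
  pullback_stable' X Y S f hS := by
    match X, Y, f with
    | of b, of a, f =>
      show (S.pullback f).functorPullback incl ∈ J a
      rw [fpb_pullback]
      exact J.pullback_stable _ hS
    | of b, WithTerminal.star, f => exact (false_of_from_star f).elim
    | WithTerminal.star, of a, f =>
      show (S.pullback f).functorPullback incl ∈ J a
      rw [show S = ⊤ from hS]
      exact J.top_mem a
    | WithTerminal.star, WithTerminal.star, f =>
      show S.pullback f = ⊤
      rw [show S = ⊤ from hS]
      rfl
  transitive' X S hS R hR := by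
    match X with
    | of c =>
      refine J.transitive (hS : S.functorPullback incl ∈ J c) _ (fun {d} g hg => ?_)
      exact hR (f := incl.map g) hg
    | WithTerminal.star =>
      have := hR (f := 𝟙 WithTerminal.star) (by rw [show S = ⊤ from hS]; trivial)
      rw [Sieve.pullback_id] at this
      exact this

end SierpTest

namespace SierpTest
variable {C : Type u} [SmallCategory C]

def extFam {c : C} (P : (WithTerminal C)ᵒᵖ ⥤ Type u) (S : Sieve (of c))
    (y : Presieve.FamilyOfElements (incl.op ⋙ P) (S.functorPullback incl).arrows) :
    Presieve.FamilyOfElements P S.arrows := fun Y f hf =>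
  match Y, f, hf with
  | of _, f, hf => y (down f) hf
  | WithTerminal.star, f, _ => (false_of_from_star f).elim

lemma extFam_compat {c : C} (P : (WithTerminal C)ᵒᵖ ⥤ Type u) (S : Sieve (of c))
    {y : Presieve.FamilyOfElements (incl.op ⋙ P) (S.functorPullback incl).arrows}
    (hy : y.Compatible) : (extFam P S y).Compatible := by
  intro Y₁ Y₂ Z g₁ g₂ f₁ f₂ h₁ h₂ comm
  match Y₁, Y₂, Z, f₁, f₂, g₁, g₂ with
  | of d₁, of d₂, of z, f₁, f₂, g₁, g₂ =>
      exact hy (down g₁) (down g₂) h₁ h₂ comm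
  | WithTerminal.star, _, _, f₁, _, _, _ => exact (false_of_from_star f₁).elim
  | of _, WithTerminal.star, _, _, f₂, _, _ => exact (false_of_from_star f₂).elim
  | of d₁, of d₂, WithTerminal.star, _, _, g₁, _ => exact (false_of_from_star g₁).elim

lemma isSheafFor_iff {c : C} (P : (WithTerminal C)ᵒᵖ ⥤ Type u) (S : Sieve (of c)) :
    Presieve.IsSheafFor P S.arrows ↔
      Presieve.IsSheafFor (incl.op ⋙ P) (S.functorPullback incl).arrows := by
  constructor
  · intro h y hy
    obtain ⟨t, ht, hu⟩ := h (extFam P S y) (extFam_compat P S hy)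
    refine ⟨t, fun _ g hg => ht (incl.map g) hg, fun t' ht' => hu t' ?_⟩
    intro Y f hf
    match Y, f, hf with
    | of d, f, hf => exact ht' (down f) hf
    | WithTerminal.star, f, _ => exact (false_of_from_star f).elim
  · intro h x hx
    obtain ⟨t, ht, hu⟩ := h (x.functorPullback incl) (hx.functorPullback incl)
    refine ⟨t, ?_, fun t' ht' => hu t' (fun _ g hg => ht' (incl.map g) hg)⟩
    intro Y f hf
    match Y, f, hf with
    | of d, f, hf => exact ht (down f) hf
    | WithTerminal.star, f, _ => exact (false_of_from_star f).elim

def liftSieve {c : C} (S : Sieve c) : Sieve (of c) where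
  arrows Y f := match Y, f with
    | of _, f => S (down f)
    | WithTerminal.star, _ => False
  downward_closed := by
    intro Y Z f hf g
    match Y, Z, f, g with
    | of d, of z, f, g => exact S.downward_closed hf (down g)
    | of d, WithTerminal.star, f, g => exact (false_of_from_star g).elim
    | WithTerminal.star, _, f, _ => exact hf.elim

lemma liftSieve_fpb {c : C} (S : Sieve c) : (liftSieve S).functorPullback incl = S := rfl

lemma auxJ_isSheaf_iff (J : GrothendieckTopology C) (P : (WithTerminal C)ᵒᵖ ⥤ Type u) :
    Presieve.IsSheaf (auxJ J) P ↔ Presieve.IsSheaf J (incl.op ⋙ P) := by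
  constructor
  · intro h c S hS
    have := h (X := of c) (liftSieve S)
      (show (liftSieve S).functorPullback incl ∈ J c by rw [liftSieve_fpb]; exact hS)
    rw [isSheafFor_iff] at this
    rwa [liftSieve_fpb] at this
  · intro h X S hS
    match X with
    | of c => exact (isSheafFor_iff P S).2 (h (S.functorPullback incl) hS)
    | WithTerminal.star =>
      rw [show S = ⊤ from hS]
      exact Presieve.isSheafFor_top_sieve P

end SierpTest

namespace SierpTest
variable {C : Type u} [SmallCategory C]

def mkPObj (E : Type u) (F : Cᵒᵖ ⥤ Type u) : WithTerminal C → Type u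
  | of c => F.obj (op c)
  | WithTerminal.star => E

noncomputable def mkPMap (E : Type u) (F : Cᵒᵖ ⥤ Type u) (e : E → limit F) :
    ∀ {Y X : WithTerminal C}, (Y ⟶ X) → (mkPObj E F X → mkPObj E F Y)
  | of a, of _, f => F.map (down f).op
  | WithTerminal.star, of _, f => (false_of_from_star f).elim
  | of a, WithTerminal.star, _ => fun x => limit.π F (op a) (e x)
  | WithTerminal.star, WithTerminal.star, _ => id

noncomputable def mkP (E : Type u) (F : Cᵒᵖ ⥤ Type u) (e : E → limit F) : (WithTerminal C)ᵒᵖ ⥤ Type u where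
  obj X := mkPObj E F X.unop
  map f := TypeCat.ofHom (mkPMap E F e f.unop)
  map_id X := by
    match X with
    | ⟨of c⟩ =>
      show TypeCat.ofHom (F.map (down (𝟙 (of c))).op) = 𝟙 _
      rw [down_id]
      exact F.map_id _
    | ⟨WithTerminal.star⟩ => rfl
  map_comp {X Y Z} f g := by
    match X, Y, Z, f, g with
    | ⟨of c'⟩, ⟨of b⟩, ⟨of a⟩, f, g =>
      show TypeCat.ofHom (F.map (down (g.unop ≫ f.unop)).op) = _
      rw [WithTerminal.down_comp, op_comp, F.map_comp]
      rfl
    | ⟨WithTerminal.star⟩, ⟨of b⟩, ⟨of a⟩, f, g =>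
      show TypeCat.ofHom (fun x => limit.π F (op a) (e x)) = TypeCat.ofHom (fun x => limit.π F (op b) (e x)) ≫ TypeCat.ofHom (F.map (down g.unop).op)
      ext x
      exact (types_congr_hom (limit.w F (down g.unop).op) (e x)).symm
    | ⟨WithTerminal.star⟩, ⟨WithTerminal.star⟩, ⟨of a⟩, f, g => rfl
    | ⟨WithTerminal.star⟩, ⟨WithTerminal.star⟩, ⟨WithTerminal.star⟩, f, g => rfl
    | ⟨of _⟩, ⟨WithTerminal.star⟩, _, f, g => exact (false_of_from_star f.unop).elim
    | ⟨of _⟩, ⟨of _⟩, ⟨WithTerminal.star⟩, f, g => exact (false_of_from_star g.unop).elim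

lemma incl_comp_mkP (E : Type u) (F : Cᵒᵖ ⥤ Type u) (e : E → limit F) :
    incl.op ⋙ mkP E F e = F := rfl

noncomputable def restCone (P : (WithTerminal C)ᵒᵖ ⥤ Type u) : Cone (incl.op ⋙ P) where
  pt := P.obj (op WithTerminal.star)
  π :=
    { app := fun c => P.map (homFrom c.unop).op
      naturality := by
        intro c d f
        dsimp
        rw [Category.id_comp, ← P.map_comp, ← op_comp]
        exact congrArg (fun g => P.map (Quiver.Hom.op g)) (Subsingleton.elim _ _) }

variable (J : GrothendieckTopology C)

lemma mkP_isSheaf (X : Comma (𝟭 (Type u)) (sheafToPresheaf J (Type u) ⋙ lim)) :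
    Presheaf.IsSheaf (auxJ J) (mkP X.left X.right.val X.hom) := by
  rw [isSheaf_iff_isSheaf_of_type, auxJ_isSheaf_iff, incl_comp_mkP,
    ← isSheaf_iff_isSheaf_of_type]
  exact X.right.cond

noncomputable def toComma : Sheaf (auxJ J) (Type u) ⥤ Comma (𝟭 (Type u)) (sheafToPresheaf J (Type u) ⋙ lim) where
  obj P :=
    { left := P.val.obj (op WithTerminal.star)
      right := ⟨incl.op ⋙ P.val, by
        rw [isSheaf_iff_isSheaf_of_type, ← auxJ_isSheaf_iff,
          ← isSheaf_iff_isSheaf_of_type]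
        exact P.cond⟩
      hom := limit.lift _ (restCone P.val) }
  map {P Q} α :=
    { left := α.hom.app (op WithTerminal.star)
      right := ⟨Functor.whiskerLeft incl.op α.hom⟩
      w := by
        apply limit.hom_ext
        intro j
        show (α.hom.app (op WithTerminal.star) ≫ limit.lift _ (restCone Q.val)) ≫ limit.π _ j =
          (limit.lift _ (restCone P.val) ≫ limMap (Functor.whiskerLeft incl.op α.hom)) ≫ limit.π _ j
        erw [Category.assoc, Category.assoc, limit.lift_π, limMap_π, limit.lift_π_assoc]
        exact (α.hom.naturality _).symm }

noncomputable def mkPHom {X Y : Comma (𝟭 (Type u)) (sheafToPresheaf J (Type u) ⋙ lim)} (φ : X ⟶ Y) :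
    mkP X.left X.right.val X.hom ⟶ mkP Y.left Y.right.val Y.hom where
  app Z := match Z with
    | ⟨of c⟩ => φ.right.hom.app (op c)
    | ⟨WithTerminal.star⟩ => φ.left
  naturality {Z W} f := by
    match Z, W, f with
    | ⟨of b⟩, ⟨of a⟩, f => exact φ.right.hom.naturality (down f.unop).op
    | ⟨WithTerminal.star⟩, ⟨of a⟩, f =>
      show TypeCat.ofHom (fun x => limit.π X.right.val (op a) (X.hom x)) ≫ φ.right.hom.app (op a) =
        φ.left ≫ TypeCat.ofHom (fun y => limit.π Y.right.val (op a) (Y.hom y))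
      ext x
      have h1 := types_congr_hom (congrArg (fun (t : X.left ⟶ limit Y.right.val) =>
        t ≫ limit.π Y.right.val (op a)) φ.w) x
      dsimp at h1 ⊢
      rw [h1]
      exact (types_congr_hom (limMap_π φ.right.hom (op a)) (X.hom x)).symm
    | ⟨WithTerminal.star⟩, ⟨WithTerminal.star⟩, f => rfl
    | ⟨of _⟩, ⟨WithTerminal.star⟩, f => exact (false_of_from_star f.unop).elim

noncomputable def ofComma : Comma (𝟭 (Type u)) (sheafToPresheaf J (Type u) ⋙ lim) ⥤ Sheaf (auxJ J) (Type u) where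
  obj X := ⟨mkP X.left X.right.val X.hom, mkP_isSheaf J X⟩
  map φ := ⟨mkPHom J φ⟩
  map_id X := by
    apply Sheaf.hom_ext
    ext Z : 2
    match Z with
    | ⟨of c⟩ => rfl
    | ⟨WithTerminal.star⟩ => rfl
  map_comp φ ψ := by
    apply Sheaf.hom_ext
    ext Z : 2
    match Z with
    | ⟨of c⟩ => rfl
    | ⟨WithTerminal.star⟩ => rfl

end SierpTest

namespace SierpTest
variable {C : Type u} [SmallCategory C] (J : GrothendieckTopology C)

noncomputable def sheafIso {J' : GrothendieckTopology (WithTerminal C)}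
    {P Q : Sheaf J' (Type u)} (i : P.val ≅ Q.val) : P ≅ Q where
  hom := ⟨i.hom⟩
  inv := ⟨i.inv⟩
  hom_inv_id := Sheaf.hom_ext i.hom_inv_id
  inv_hom_id := Sheaf.hom_ext i.inv_hom_id

noncomputable def unitIsoAux (P : Sheaf (auxJ J) (Type u)) :
    P.val ≅ mkP (P.val.obj (op WithTerminal.star)) (incl.op ⋙ P.val)
      (limit.lift _ (restCone P.val)) :=
  NatIso.ofComponents
    (fun Z => match Z with
      | ⟨of c⟩ => Iso.refl _
      | ⟨WithTerminal.star⟩ => Iso.refl _)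
    (by
      intro Z W f
      match Z, W, f with
      | ⟨of b⟩, ⟨of a⟩, f =>
        show P.val.map f ≫ 𝟙 _ = 𝟙 _ ≫ _
        rw [Category.comp_id]; erw [Category.id_comp]
        rfl
      | ⟨WithTerminal.star⟩, ⟨of a⟩, f =>
        show P.val.map f ≫ 𝟙 _ = 𝟙 _ ≫ _
        rw [Category.comp_id]; erw [Category.id_comp]
        ext x
        show P.val.map f x = limit.π (incl.op ⋙ P.val) (op a) (limit.lift _ (restCone P.val) x)
        rw [show limit.π (incl.op ⋙ P.val) (op a) (limit.lift _ (restCone P.val) x)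
            = P.val.map (homFrom a).op x from
          types_congr_hom (limit.lift_π (restCone P.val) (op a)) x]
        rw [show f = (homFrom a).op from congrArg Quiver.Hom.op (Subsingleton.elim _ _)]
        rfl
      | ⟨WithTerminal.star⟩, ⟨WithTerminal.star⟩, f =>
        show P.val.map f ≫ 𝟙 _ = 𝟙 _ ≫ _
        rw [Category.comp_id]; erw [Category.id_comp]
        rw [show f = 𝟙 (op WithTerminal.star) from
          congrArg Quiver.Hom.op (Subsingleton.elim _ _)]
        rw [P.val.map_id]
        rfl
      | ⟨of _⟩, ⟨WithTerminal.star⟩, f => exact (false_of_from_star f.unop).elim)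

lemma lift_restCone (X : Comma (𝟭 (Type u)) (sheafToPresheaf J (Type u) ⋙ lim)) :
    limit.lift (incl.op ⋙ mkP X.left X.right.val X.hom)
      (restCone (mkP X.left X.right.val X.hom)) = X.hom := by
  apply limit.hom_ext
  intro j
  rw [limit.lift_π]
  rfl

noncomputable def rightIsoAux (X : Comma (𝟭 (Type u)) (sheafToPresheaf J (Type u) ⋙ lim)) :
    (⟨incl.op ⋙ mkP X.left X.right.val X.hom, by
        rw [isSheaf_iff_isSheaf_of_type, ← auxJ_isSheaf_iff,
          ← isSheaf_iff_isSheaf_of_type]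
        exact (ofComma J |>.obj X).cond⟩ : Sheaf J (Type u)) ≅ X.right where
  hom := ⟨𝟙 X.right.val⟩
  inv := ⟨𝟙 X.right.val⟩
  hom_inv_id := Sheaf.hom_ext (by simp; try rfl)
  inv_hom_id := Sheaf.hom_ext (by simp; try rfl)

noncomputable def equivSheafComma :
    Sheaf (auxJ J) (Type u) ≌ Comma (𝟭 (Type u)) (sheafToPresheaf J (Type u) ⋙ lim) :=
  CategoryTheory.Equivalence.mk (toComma J) (ofComma J)
    (NatIso.ofComponents (fun P => sheafIso (unitIsoAux J P)) (by
      intro P Q α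
      apply Sheaf.hom_ext
      apply NatTrans.ext
      funext Z
      match Z with
      | ⟨of c⟩ =>
        show α.hom.app (op (of c)) ≫ 𝟙 (Q.val.obj (op (of c)))
          = 𝟙 (P.val.obj (op (of c))) ≫ α.hom.app (op (of c))
        rw [Category.comp_id, Category.id_comp]
      | ⟨WithTerminal.star⟩ =>
        show α.hom.app (op WithTerminal.star) ≫ 𝟙 (Q.val.obj (op WithTerminal.star))
          = 𝟙 (P.val.obj (op WithTerminal.star)) ≫ α.hom.app (op WithTerminal.star)
        rw [Category.comp_id, Category.id_comp]))
    (NatIso.ofComponents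
      (fun X => Comma.isoMk (Iso.refl _) (rightIsoAux J X) (by
        show 𝟙 _ ≫ X.hom = limit.lift _ (restCone (mkP X.left X.right.val X.hom)) ≫ limMap (𝟙 X.right.val)
        rw [Category.id_comp, lift_restCone]
        apply limit.hom_ext
        intro j
        simp
        erw [Category.assoc, limMap_π]; rfl))
      (by
        intro X Y φ
        apply Comma.hom_ext
        · show ((ofComma J ⋙ toComma J).map φ).left ≫ 𝟙 _ = 𝟙 _ ≫ φ.left
          rw [Category.comp_id, Category.id_comp]
          rfl
        · apply Sheaf.hom_ext
          apply NatTrans.ext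
          funext c
          show (Functor.whiskerLeft incl.op (mkPHom J φ)).app c
              ≫ 𝟙 ((incl.op ⋙ mkP Y.left Y.right.val Y.hom).obj c)
            = 𝟙 (X.right.val.obj c) ≫ φ.right.hom.app c
          rw [Category.comp_id, Category.id_comp]
          rfl))

end SierpTest


/-- Freely adjoining a terminal object `*` to a site `(C, J)` yields a site `(C', J')` in which
the covering sieves on objects of `C` are exactly those whose restriction to `C` is `J`-covering,
the only covering sieve on `*` is the maximal one, and sheaves of sets on `(C', J')` form a
category equivalent to the comma category `(Set ↓ Γ)`, where `Γ` sends a sheaf on `(C, J)` to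
its set of global sections (the limit of the underlying presheaf). -/
theorem sierpinski_cone_site
    {C : Type u} [SmallCategory C] (J : GrothendieckTopology C) :
    ∃ J' : GrothendieckTopology (WithTerminal C),
      (∀ (c : C) (S : Sieve (WithTerminal.incl.obj c)),
        S ∈ J' (WithTerminal.incl.obj c) ↔ S.functorPullback WithTerminal.incl ∈ J c) ∧
      (∀ S : Sieve (WithTerminal.star : WithTerminal C),
        S ∈ J' WithTerminal.star ↔ S = ⊤) ∧
      Nonempty (Sheaf J' (Type u) ≌
        Comma (𝟭 (Type u)) (sheafToPresheaf J (Type u) ⋙ lim)) := by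
  exact ⟨SierpTest.auxJ J, fun c S => Iff.rfl, fun S => Iff.rfl,
    ⟨SierpTest.equivSheafComma J⟩⟩
end

section
/- Let R be a commutative ring with an ideal I_R carrying a divided power structure γ_R, and let A be a commutative R-algebra with an ideal I carrying a divided power structure γ, such that the structure map R → A sends I_R into I and commutes with the divided powers (γ_n applied to the image of x equals the image of γ_{R,n}(x) for all x ∈ I_R, n ≥ 1). Say that (A, I, γ) is of finite PD type over (R, I_R, γ_R) if there exist finitely many elements x₁, …, x_p ∈ I and y₁, …, y_q ∈ A such that A is generated as an R-algebra by the elements γ_k(x_i) (k ≥ 1, 1 ≤ i ≤ p) together with y₁, …, y_q, and I is generated as an ideal by the image of I_R together with the elements γ_k(x_i) (k ≥ 1). Suppose a₁, …, a_m ∈ A generate the unit ideal of A, and for each i the localization A_{a_i} carries a divided power structure γ^{(i)} on the ideal I·A_{a_i} such that the localization map A → A_{a_i} commutes with the divided powers on I. If for every i the PD ring (A_{a_i}, I·A_{a_i}, γ^{(i)}) is of finite PD type over (R, I_R, γ_R), then (A, I, γ) is of finite PD type over (R, I_R, γ_R). -/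
/-- `(A, I, γ)` is of *finite PD type* over a divided power ring mapping to it via
`φ : R →+* A` (with PD ideal `I_R`) if there are finitely many elements `x₁, …, x_p ∈ I`
and `y₁, …, y_q ∈ A` such that `A` is generated as an `R`-algebra by the divided powers
`γ_k(x_i)` (`k ≥ 1`) together with the `y_j`, and `I` is generated as an ideal by the
image of `I_R` together with the `γ_k(x_i)` (`k ≥ 1`). -/
def IsFinitePDType {R A : Type*} [CommRing R] [CommRing A] (φ : R →+* A)
    (I_R : Ideal R) {I : Ideal A} (γ : DividedPowers I) : Prop :=
  ∃ (p q : ℕ) (x : Fin p → A) (y : Fin q → A),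
    (∀ i, x i ∈ I) ∧
    Subring.closure
      (Set.range ⇑φ ∪ Set.range y ∪
        {b | ∃ k : ℕ, 1 ≤ k ∧ ∃ i, b = γ.dpow k (x i)}) = ⊤ ∧
    I = Ideal.span
      (⇑φ '' (I_R : Set R) ∪ {b | ∃ k : ℕ, 1 ≤ k ∧ ∃ i, b = γ.dpow k (x i)})

section Aux

variable {A : Type*} [CommRing A]

private lemma aux_pow_mul_mem (c : A) (J : Ideal A) (f : A)
    (h : algebraMap A (Localization.Away c) f ∈ J.map (algebraMap A (Localization.Away c))) :
    ∃ n : ℕ, c ^ n * f ∈ J := by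
  obtain ⟨⟨j, s⟩, hs⟩ := (IsLocalization.mem_map_algebraMap_iff (Submonoid.powers c) _).mp h
  obtain ⟨k, hk⟩ := s.2
  rw [← map_mul] at hs
  obtain ⟨d, hd⟩ := IsLocalization.exists_of_eq (M := Submonoid.powers c) hs
  obtain ⟨K, hK⟩ := d.2
  refine ⟨K + k, ?_⟩
  have e : c ^ (K + k) * f = (d : A) * (f * (s : A)) := by rw [← hK, ← hk]; ring
  rw [e, hd]
  exact J.mul_mem_left _ j.2

private lemma aux_exists_num (c : A) (J : Ideal A) (t : Localization.Away c)
    (h : t ∈ J.map (algebraMap A (Localization.Away c))) :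
    ∃ j ∈ J, ∃ n : ℕ, algebraMap A (Localization.Away c) j
      = algebraMap A (Localization.Away c) c ^ n * t := by
  obtain ⟨⟨j, s⟩, hs⟩ := (IsLocalization.mem_map_algebraMap_iff (Submonoid.powers c) _).mp h
  obtain ⟨k, hk⟩ := s.2
  exact ⟨j, j.2, k, by rw [← hs, ← hk, map_pow]; ring⟩

private lemma aux_exists_num' (c : A) (t : Localization.Away c) :
    ∃ w : A, ∃ n : ℕ, algebraMap A (Localization.Away c) w
      = algebraMap A (Localization.Away c) c ^ n * t := by
  obtain ⟨⟨w, s⟩, hs⟩ := IsLocalization.surj (Submonoid.powers c) t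
  obtain ⟨k, hk⟩ := s.2
  exact ⟨w, k, by rw [← hs, ← hk, map_pow]; ring⟩

private lemma isFinitePDType_of_fintype {R : Type*} [CommRing R] [CommRing A] (φ : R →+* A)
    (I_R : Ideal R) {I : Ideal A} (γ : DividedPowers I)
    {ι κ : Type*} [Fintype ι] [Fintype κ] (x : ι → A) (y : κ → A)
    (hx : ∀ i, x i ∈ I)
    (hgen : Subring.closure (Set.range ⇑φ ∪ Set.range y ∪
        {b | ∃ k : ℕ, 1 ≤ k ∧ ∃ i, b = γ.dpow k (x i)}) = ⊤)
    (hideal : I = Ideal.span (⇑φ '' (I_R : Set R) ∪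
        {b | ∃ k : ℕ, 1 ≤ k ∧ ∃ i, b = γ.dpow k (x i)})) :
    IsFinitePDType φ I_R γ := by
  classical
  let e := (Fintype.equivFin ι).symm
  let e' := (Fintype.equivFin κ).symm
  have hr : Set.range (y ∘ e') = Set.range y := e'.surjective.range_comp y
  have hDeq : {b | ∃ k : ℕ, 1 ≤ k ∧ ∃ i, b = γ.dpow k ((x ∘ e) i)}
      = {b | ∃ k : ℕ, 1 ≤ k ∧ ∃ i, b = γ.dpow k (x i)} := by
    ext b
    constructor
    · rintro ⟨k, hk, i, rfl⟩; exact ⟨k, hk, e i, rfl⟩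
    · rintro ⟨k, hk, i, rfl⟩; exact ⟨k, hk, e.symm i, by simp⟩
  refine ⟨Fintype.card ι, Fintype.card κ, x ∘ e, y ∘ e', fun i => hx _, ?_, ?_⟩
  · rw [hr, hDeq]; exact hgen
  · rw [hDeq]; exact hideal

end Aux

/-- Being of finite PD type is a local property: if `a₁, …, a_m` generate the unit ideal
of `A` and each localization `(A_{aᵢ}, I·A_{aᵢ}, γ⁽ⁱ⁾)` is of finite PD type over
`(R, I_R, γ_R)`, then so is `(A, I, γ)`. -/
theorem isFinitePDType_of_localizations
    {R A : Type*} [CommRing R] [CommRing A] (φ : R →+* A)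
    (I_R : Ideal R) (γR : DividedPowers I_R) (I : Ideal A) (γ : DividedPowers I)
    (hmap : ∀ r ∈ I_R, φ r ∈ I)
    (hcomp : ∀ n : ℕ, 1 ≤ n → ∀ r ∈ I_R, γ.dpow n (φ r) = φ (γR.dpow n r))
    {m : ℕ} (a : Fin m → A) (ha : Ideal.span (Set.range a) = ⊤)
    (γ' : ∀ i, DividedPowers (I.map (algebraMap A (Localization.Away (a i)))))
    (hcomp' : ∀ i, ∀ n : ℕ, 1 ≤ n → ∀ b ∈ I,
      (γ' i).dpow n (algebraMap A (Localization.Away (a i)) b) =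
        algebraMap A (Localization.Away (a i)) (γ.dpow n b))
    (hloc : ∀ i, IsFinitePDType
      ((algebraMap A (Localization.Away (a i))).comp φ) I_R (γ' i)) :
    IsFinitePDType φ I_R γ := by
  classical
  -- coefficients expressing 1 in terms of the `a i`
  have h1 : (1 : A) ∈ Ideal.span (Set.range a) := ha ▸ Submodule.mem_top
  obtain ⟨c, hc⟩ := (Submodule.mem_span_range_iff_exists_fun A).mp h1
  -- destructure the local finite PD type data
  choose p q x y hxI hgen hideal using hloc
  -- lift the local PD generators `x i j` to elements of `I`
  choose z hzI nz hz using fun i (j : Fin (p i)) =>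
    aux_exists_num (a i) I (x i j) (hxI i j)
  -- lift the local algebra generators `y i l` to elements of `A`
  choose w nw hw using fun i (l : Fin (q i)) => aux_exists_num' (a i) (y i l)
  -- global generators
  set X : (Σ i : Fin m, Fin (p i)) → A := fun s => z s.1 s.2 with hXdef
  set Y : ((Σ i : Fin m, Fin (q i)) ⊕ (Fin m ⊕ Fin m)) → A :=
    Sum.elim (fun s => w s.1 s.2) (Sum.elim a c) with hYdef
  set D : Set A := {b | ∃ k : ℕ, 1 ≤ k ∧ ∃ s, b = γ.dpow k (X s)} with hDdef
  set S : Subring A := Subring.closure (Set.range ⇑φ ∪ Set.range Y ∪ D) with hSdef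
  set J : Ideal A := Ideal.span (⇑φ '' (I_R : Set R) ∪ D) with hJdef
  have haS : ∀ i, a i ∈ S :=
    fun i => Subring.subset_closure (Or.inl (Or.inr ⟨Sum.inr (Sum.inl i), rfl⟩))
  have hcS : ∀ i, c i ∈ S :=
    fun i => Subring.subset_closure (Or.inl (Or.inr ⟨Sum.inr (Sum.inr i), rfl⟩))
  have hwS : ∀ i l, w i l ∈ S :=
    fun i l => Subring.subset_closure (Or.inl (Or.inr ⟨Sum.inl ⟨i, l⟩, rfl⟩))
  have hφS : ∀ r, φ r ∈ S :=
    fun r => Subring.subset_closure (Or.inl (Or.inl ⟨r, rfl⟩))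
  have hDS : D ⊆ (S : Set A) := fun b hb => Subring.subset_closure (Or.inr hb)
  -- key compatibility between local and global divided powers
  have hdp : ∀ i (j : Fin (p i)) (k : ℕ), 1 ≤ k →
      algebraMap A (Localization.Away (a i)) (γ.dpow k (z i j))
        = algebraMap A (Localization.Away (a i)) (a i) ^ (nz i j * k)
            * (γ' i).dpow k (x i j) := by
    intro i j k hk
    rw [← hcomp' i k hk _ (hzI i j), hz i j, ← smul_eq_mul, (γ' i).dpow_smul (n := k) (hxI i j),
      smul_eq_mul, ← pow_mul]
  -- the ideal statement
  have hIJ : I = J := by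
    apply le_antisymm
    · intro f hf
      apply Submodule.mem_of_span_eq_top_of_smul_pow_mem J (Set.range a) ha
      rintro ⟨-, i, rfl⟩
      have hfm : algebraMap A (Localization.Away (a i)) f
          ∈ I.map (algebraMap A (Localization.Away (a i))) := Ideal.mem_map_of_mem _ hf
      rw [hideal i] at hfm
      have hsub : Ideal.span
          (⇑((algebraMap A (Localization.Away (a i))).comp φ) '' (I_R : Set R) ∪
            {b | ∃ k : ℕ, 1 ≤ k ∧ ∃ j, b = (γ' i).dpow k (x i j)})
          ≤ J.map (algebraMap A (Localization.Away (a i))) := by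
        rw [Ideal.span_le]
        rintro u (⟨r, hr, rfl⟩ | ⟨k, hk, j, rfl⟩)
        · exact Ideal.mem_map_of_mem _ (Ideal.subset_span (Or.inl ⟨r, hr, rfl⟩))
        · have hmem : algebraMap A (Localization.Away (a i)) (a i) ^ (nz i j * k)
              * (γ' i).dpow k (x i j)
              ∈ J.map (algebraMap A (Localization.Away (a i))) := by
            rw [← hdp i j k hk]
            exact Ideal.mem_map_of_mem _
              (Ideal.subset_span (Or.inr ⟨k, hk, ⟨i, j⟩, rfl⟩))
          obtain ⟨u, hu⟩ := (IsLocalization.map_units (Localization.Away (a i))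
            (⟨a i, Submonoid.mem_powers _⟩ : Submonoid.powers (a i))).pow (nz i j * k)
          have h2 : (γ' i).dpow k (x i j)
              = ↑u⁻¹ * (algebraMap A (Localization.Away (a i)) (a i) ^ (nz i j * k)
                * (γ' i).dpow k (x i j)) := by
            rw [← hu, ← mul_assoc, Units.inv_mul, one_mul]
          rw [h2]
          exact Ideal.mul_mem_left _ _ hmem
      obtain ⟨n, hn⟩ := aux_pow_mul_mem (a i) J f (hsub hfm)
      exact ⟨n, by simpa only [smul_eq_mul] using hn⟩
    · rw [hJdef, Ideal.span_le]
      rintro u (⟨r, hr, rfl⟩ | ⟨k, hk, s, rfl⟩)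
      · exact hmap r hr
      · exact γ.dpow_mem (Nat.one_le_iff_ne_zero.mp hk) (hzI s.1 s.2)
  -- the subring statement, first locally
  have hSa : ∀ b : A, ∀ i, ∃ N : ℕ, a i ^ N * b ∈ S := by
    intro b i
    have key : ∀ t : Localization.Away (a i), ∃ s ∈ S, ∃ n : ℕ,
        algebraMap A (Localization.Away (a i)) s
          = algebraMap A (Localization.Away (a i)) (a i) ^ n * t := by
      intro t
      have ht : t ∈ Subring.closure
          (Set.range ⇑((algebraMap A (Localization.Away (a i))).comp φ) ∪
            Set.range (y i) ∪
            {b | ∃ k : ℕ, 1 ≤ k ∧ ∃ j, b = (γ' i).dpow k (x i j)}) := by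
        rw [hgen i]; exact Subring.mem_top t
      induction ht using Subring.closure_induction with
      | mem u hu =>
        rcases hu with (⟨r, rfl⟩ | ⟨l, rfl⟩) | ⟨k, hk, j, rfl⟩
        · exact ⟨φ r, hφS r, 0, by simp⟩
        · exact ⟨w i l, hwS i l, nw i l, hw i l⟩
        · exact ⟨γ.dpow k (z i j), hDS ⟨k, hk, ⟨i, j⟩, rfl⟩, nz i j * k, hdp i j k hk⟩
      | zero => exact ⟨0, zero_mem S, 0, by simp⟩
      | one => exact ⟨1, one_mem S, 0, by simp⟩
      | add u v hu hv ihu ihv =>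
        obtain ⟨s, hs, n, e⟩ := ihu
        obtain ⟨s', hs', n', e'⟩ := ihv
        refine ⟨s * a i ^ n' + s' * a i ^ n,
          add_mem (mul_mem hs (pow_mem (haS i) n')) (mul_mem hs' (pow_mem (haS i) n)),
          n + n', ?_⟩
        rw [map_add, map_mul, map_mul, map_pow, map_pow, e, e']
        ring
      | neg u hu ihu =>
        obtain ⟨s, hs, n, e⟩ := ihu
        exact ⟨-s, neg_mem hs, n, by rw [map_neg, e]; ring⟩
      | mul u v hu hv ihu ihv =>
        obtain ⟨s, hs, n, e⟩ := ihu
        obtain ⟨s', hs', n', e'⟩ := ihv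
        exact ⟨s * s', mul_mem hs hs', n + n', by rw [map_mul, e, e']; ring⟩
    obtain ⟨s, hs, n, e⟩ := key (algebraMap A (Localization.Away (a i)) b)
    rw [← map_pow, ← map_mul] at e
    obtain ⟨d, hd⟩ := IsLocalization.exists_of_eq (M := Submonoid.powers (a i)) e
    obtain ⟨K, hK⟩ := d.2
    refine ⟨K + n, ?_⟩
    have e2 : a i ^ (K + n) * b = (d : A) * (a i ^ n * b) := by rw [← hK]; ring
    rw [e2, ← hd, ← hK]
    exact mul_mem (pow_mem (haS i) K) hs
  -- glue
  have hStop : S = ⊤ := by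
    rw [Subring.eq_top_iff']
    intro b
    choose N hN using hSa b
    have hmem : b ∈ Subalgebra.toSubmodule (⊥ : Subalgebra S A) := by
      apply Submodule.mem_of_span_eq_top_of_smul_pow_mem _
        (Set.range fun i => (⟨a i, haS i⟩ : S))
      · rw [Ideal.eq_top_iff_one]
        apply (Submodule.mem_span_range_iff_exists_fun (S : Type _)).mpr
        refine ⟨fun i => ⟨c i, hcS i⟩, ?_⟩
        apply Subtype.ext
        push_cast
        simpa only [smul_eq_mul, MulMemClass.coe_mul] using hc
      · rintro ⟨-, i, rfl⟩
        refine ⟨N i, ?_⟩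
        rw [Subalgebra.mem_toSubmodule, Algebra.mem_bot]
        refine ⟨⟨a i ^ N i * b, hN i⟩, ?_⟩
        show (a i ^ N i * b : A) = _
        rw [Algebra.smul_def]
        norm_cast
    rw [Subalgebra.mem_toSubmodule, Algebra.mem_bot] at hmem
    obtain ⟨s, hs⟩ := hmem
    have : (s : A) = b := hs
    exact this ▸ s.2
  exact isFinitePDType_of_fintype φ I_R γ X Y (fun s => hzI s.1 s.2) hStop hIJ
end

section
/- Consider the category whose objects are pairs (A, f) of a set A with a surjective function f : A → A, and whose morphisms (A, f) → (A', f') are functions g : A → A' with g ∘ f = f' ∘ g (equivalently, the full subcategory of the category of sets with an action of the additive monoid ℕ on those objects where the action of the generator is surjective). This category has all filtered colimits, computed on underlying sets. The object (ℤ, n ↦ n + 1) is not compact, and moreover it is not isomorphic to the colimit of any filtered diagram of compact objects in this category. -/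
open CategoryTheory CategoryTheory.Limits Opposite

/-- A set equipped with a surjective self-map (equivalently, an `ℕ`-set on which the
generator acts surjectively). -/
structure SurjSelfMap : Type 1 where
  carrier : Type
  f : carrier → carrier
  surj : Function.Surjective f

namespace SurjSelfMap

/-- Morphisms are equivariant maps: `g ∘ f = f' ∘ g`. -/
instance : Category SurjSelfMap where
  Hom X Y := {g : X.carrier → Y.carrier // ∀ x, g (X.f x) = Y.f (g x)}
  id X := ⟨id, fun _ => rfl⟩
  comp g h := ⟨fun x => h.1 (g.1 x), fun x => by simp only []; rw [g.2, h.2]⟩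

/-- The forgetful functor to underlying sets. -/
def forget : SurjSelfMap ⥤ Type where
  obj X := X.carrier
  map g := TypeCat.ofHom g.1

/-- The object `(ℤ, n ↦ n + 1)`. -/
def ints : SurjSelfMap :=
  ⟨ℤ, fun n => n + 1, fun n => ⟨n - 1, by ring⟩⟩

lemma hom_ext {X Y : SurjSelfMap} {g h : X ⟶ Y} (w : g.1 = h.1) : g = h := Subtype.ext w

section Colim

variable {J : Type} [Category.{0} J] (K : J ⥤ SurjSelfMap)

/-- The self-maps as a natural endotransformation of the underlying diagram of sets. -/
def selfNat : (K ⋙ forget) ⟶ (K ⋙ forget) where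
  app j := TypeCat.ofHom (K.obj j).f
  naturality i j φ := by ext x; exact ((K.map φ).2 x).symm

noncomputable def colimObj : SurjSelfMap where
  carrier := colimit (K ⋙ forget)
  f := colimMap (selfNat K)
  surj := by
    intro z
    obtain ⟨j, y, rfl⟩ := Types.jointly_surjective' z
    obtain ⟨y', rfl⟩ := (K.obj j).surj y
    refine ⟨colimit.ι (K ⋙ forget) j y', ?_⟩
    exact types_congr_hom (ι_colimMap (selfNat K) j) y'

noncomputable def colimCocone : Cocone K where
  pt := colimObj K
  ι :=
    { app := fun j => ⟨colimit.ι (K ⋙ forget) j,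
        fun x => (types_congr_hom (ι_colimMap (selfNat K) j) x).symm⟩
      naturality := fun i j φ => hom_ext (funext fun x =>
        types_congr_hom (colimit.w (K ⋙ forget) φ) x) }

noncomputable def colimIsColimit : IsColimit (colimCocone K) where
  desc s := ⟨⇑(colimit.desc (K ⋙ forget) (forget.mapCocone s)), by
    intro z
    have h : colimMap (selfNat K) ≫ colimit.desc (K ⋙ forget) (forget.mapCocone s)
        = colimit.desc (K ⋙ forget) (forget.mapCocone s) ≫ (TypeCat.ofHom s.pt.f : s.pt.carrier ⟶ s.pt.carrier) := by
      apply colimit.hom_ext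
      intro j
      simp only [ι_colimMap_assoc, colimit.ι_desc, colimit.ι_desc_assoc]
      ext x; exact ((s.ι.app j).2 x).trans (congrArg s.pt.f (types_congr_hom (colimit.ι_desc (forget.mapCocone s) j) x).symm)
    exact types_congr_hom h z⟩
  fac s j := hom_ext (funext fun x => types_congr_hom (colimit.ι_desc (forget.mapCocone s) j) x)
  uniq s m w := by
    apply hom_ext
    have h : ∀ j, colimit.ι (K ⋙ forget) j ≫ TypeCat.ofHom m.1
        = colimit.ι (K ⋙ forget) j ≫ colimit.desc (K ⋙ forget) (forget.mapCocone s) :=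
      fun j => by rw [colimit.ι_desc]; ext x; exact congrFun (congrArg Subtype.val (w j)) x
    exact funext fun x => types_congr_hom (colimit.hom_ext h) x

instance : HasColimitsOfShape J SurjSelfMap where
  has_colimit K := HasColimit.mk ⟨_, colimIsColimit K⟩

end Colim

instance : HasFilteredColimits SurjSelfMap where
  HasColimitsOfShape _ _ _ := inferInstance

instance : PreservesFilteredColimits forget where
  preserves_filtered_colimits J _ _ :=
    { preservesColimit := fun {K} =>
        preservesColimit_of_preserves_colimit_cocone (colimIsColimit K)
          ((colimit.isColimit (K ⋙ forget)).ofIsoColimit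
            (Cocones.ext (Iso.refl (colimit (K ⋙ forget))) (fun j => by aesop_cat))) }

section Pred

/-- `ℕ` with the (surjective) predecessor map. -/
def predObj : SurjSelfMap := ⟨ℕ, Nat.pred, fun n => ⟨n + 1, rfl⟩⟩

/-- `Nat.pred` as an endomorphism of `predObj`. -/
def predHom : predObj ⟶ predObj := ⟨Nat.pred, fun _ => rfl⟩

/-- The telescope `predObj → predObj → ⋯` along `predHom`. -/
def predDiag : ℕ ⥤ SurjSelfMap := Functor.ofSequence (fun _ => predHom)

/-- The one-point object. -/
def ptObj : SurjSelfMap := ⟨PUnit, id, fun x => ⟨x, rfl⟩⟩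

instance (X : SurjSelfMap) : Subsingleton (X ⟶ ptObj) :=
  ⟨fun g h => hom_ext (funext fun x => rfl)⟩

lemma pred_iter (k n : ℕ) : Nat.pred^[k] n = n - k := by
  induction k with
  | zero => rfl
  | succ k ih => rw [Function.iterate_succ_apply', ih, Nat.pred_eq_sub_one, Nat.sub_sub]

lemma predDiag_map (k : ℕ) :
    (predDiag.map (homOfLE (Nat.zero_le k))).1 = Nat.pred^[k] := by
  induction k with
  | zero =>
      have : homOfLE (Nat.zero_le 0) = 𝟙 (0 : ℕ) := rfl
      rw [this, predDiag.map_id]; rfl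
  | succ k ih =>
      have : homOfLE (Nat.zero_le (k + 1))
          = homOfLE (Nat.zero_le k) ≫ homOfLE (Nat.le_add_right k 1) := rfl
      rw [this, predDiag.map_comp]
      have h2 : predDiag.map (homOfLE (Nat.le_add_right k 1)) = predHom :=
        Functor.ofSequence_map_homOfLE_succ _ k
      rw [h2]
      funext x
      show Nat.pred ((predDiag.map (homOfLE (Nat.zero_le k))).1 x) = _
      rw [ih]; exact (Function.iterate_succ_apply' Nat.pred k x).symm

/-- The cocone components of a cocone over `predDiag`, as functions on `ℕ`. -/
def capp (s : Cocone predDiag) (n : ℕ) : ℕ → s.pt.carrier := (s.ι.app n).1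

/-- The constant cocone on the one-point object. -/
def predCocone : Cocone predDiag where
  pt := ptObj
  ι :=
    { app := fun n => ⟨fun _ => PUnit.unit, fun _ => rfl⟩
      naturality := fun i j φ => hom_ext (funext fun x => rfl) }

lemma capp_step (s : Cocone predDiag) (n : ℕ) (x : ℕ) :
    capp s (n + 1) (Nat.pred x) = capp s n x := by
  have h := s.ι.naturality (homOfLE (Nat.le_add_right n 1))
  have h2 : predDiag.map (homOfLE (Nat.le_add_right n 1)) = predHom :=
    Functor.ofSequence_map_homOfLE_succ _ n
  rw [h2] at h
  exact congrFun (congrArg Subtype.val h) x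

lemma capp_fix (s : Cocone predDiag) (n : ℕ) (x : ℕ) :
    s.pt.f (capp s n x) = capp s n (Nat.pred x) :=
  ((s.ι.app n).2 x).symm

lemma capp_shift (s : Cocone predDiag) (k n : ℕ) (x : ℕ) :
    capp s (n + k) (Nat.pred^[k] x) = capp s n x := by
  induction k with
  | zero => rfl
  | succ k ih =>
      have e : n + (k + 1) = (n + k) + 1 := rfl
      rw [e, Function.iterate_succ_apply' Nat.pred,
        capp_step s (n + k) (Nat.pred^[k] x)]
      exact ih

lemma capp_const (s : Cocone predDiag) (n : ℕ) (x : ℕ) :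
    capp s n x = capp s 0 0 := by
  have h1 : capp s (n + x) (Nat.pred^[x] x) = capp s n x := capp_shift s x n x
  have h2 : capp s (0 + (n + x)) (Nat.pred^[n + x] 0) = capp s 0 0 :=
    capp_shift s (n + x) 0 0
  rw [pred_iter, Nat.sub_self] at h1
  rw [pred_iter, Nat.zero_sub, Nat.zero_add] at h2
  rw [← h1, ← h2]

/-- The one-point cocone is a colimit of the pred-telescope. -/
def predIsColimit : IsColimit predCocone where
  desc s := ⟨fun _ => capp s 0 0, fun _ => by
    show capp s 0 0 = s.pt.f (capp s 0 0)
    exact (capp_fix s 0 0).symm⟩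
  fac s n := hom_ext (funext fun x => (capp_const s n x).symm)
  uniq s m w := hom_ext (funext fun x =>
    congrFun (congrArg Subtype.val (w 0)) (0 : ℕ))

end Pred

section Main

lemma iterate_comm {X Y : SurjSelfMap} (g : X ⟶ Y) (n : ℕ) (x : X.carrier) :
    g.1 (X.f^[n] x) = Y.f^[n] (g.1 x) := by
  induction n with
  | zero => rfl
  | succ n ih =>
      rw [Function.iterate_succ_apply' X.f, Function.iterate_succ_apply' Y.f, g.2, ih]

/-- Every element of a compact object is periodic. -/
lemma periodic_of_compact (X : SurjSelfMap)
    (hX : PreservesColimitsOfShape ℕ (coyoneda.obj (op X)))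
    (x : X.carrier) : ∃ p, 0 < p ∧ X.f^[p] x = x := by
  by_contra hcon
  push_neg at hcon
  have hnp : ∀ p, 0 < p → X.f^[p] x ≠ x := fun p hp he => (hcon p hp) he
  classical
  set T : Set X.carrier := Set.range fun j => X.f^[j] x with hTdef
  let g : X.carrier → ℕ := fun y => if h : ∃ k, X.f^[k] y ∈ T then Nat.find h else 0
  -- equivariance of `g`
  have hgeq : ∀ y, g (X.f y) = Nat.pred (g y) := by
    intro y
    by_cases hy : ∃ k, X.f^[k] y ∈ T
    · by_cases h0 : y ∈ T
      · obtain ⟨j, hj⟩ := h0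
        have hj' : X.f^[j] x = y := hj
        have hfyT : X.f y ∈ T := ⟨j + 1, by
          show X.f^[j + 1] x = X.f y
          rw [Function.iterate_succ_apply' X.f j x]
          exact congrArg X.f hj'⟩
        have hfy : ∃ k, X.f^[k] (X.f y) ∈ T := ⟨0, hfyT⟩
        have e1 : g (X.f y) = 0 := by
          rw [show g (X.f y) = Nat.find hfy from dif_pos hfy]
          exact (Nat.find_eq_zero hfy).mpr hfyT
        have e2 : g y = 0 := by
          rw [show g y = Nat.find hy from dif_pos hy]
          exact (Nat.find_eq_zero hy).mpr ⟨j, hj'⟩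
        rw [e1, e2]
        rfl
      · have hne : Nat.find hy ≠ 0 := by
          intro h
          exact h0 (by have := Nat.find_spec hy; rwa [h] at this)
        obtain ⟨k', hk'⟩ := Nat.exists_eq_succ_of_ne_zero hne
        have hfy : ∃ k, X.f^[k] (X.f y) ∈ T := ⟨k', by
          have := Nat.find_spec hy
          rw [hk'] at this
          rwa [Function.iterate_succ_apply X.f k' y] at this⟩
        have e1 : g (X.f y) = k' := by
          rw [show g (X.f y) = Nat.find hfy from dif_pos hfy]
          refine (Nat.find_eq_iff hfy).mpr ⟨?_, ?_⟩
          · have := Nat.find_spec hy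
            rw [hk'] at this
            rwa [Function.iterate_succ_apply X.f k' y] at this
          · intro m hm hmem
            refine Nat.find_min hy (m := m + 1) (by omega) ?_
            rwa [Function.iterate_succ_apply X.f m y]
        have e2 : g y = k' + 1 := by
          rw [show g y = Nat.find hy from dif_pos hy]; exact hk'
        rw [e1, e2]
        rfl
    · have hfy : ¬ ∃ k, X.f^[k] (X.f y) ∈ T := by
        rintro ⟨m, hm⟩
        exact hy ⟨m + 1, by rwa [Function.iterate_succ_apply X.f m y]⟩
      rw [show g (X.f y) = 0 from dif_neg hfy, show g y = 0 from dif_neg hy]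
      rfl
  -- unboundedness of `g`
  have hub : ∀ k, ∃ y, g y = k + 1 := by
    intro k
    obtain ⟨y, hy⟩ := X.surj.iterate (k + 1) x
    have hmem : ∃ m, X.f^[m] y ∈ T := ⟨k + 1, by rw [hy]; exact ⟨0, rfl⟩⟩
    have hgy : g y = Nat.find hmem := dif_pos hmem
    have hle : Nat.find hmem ≤ k + 1 := Nat.find_min' hmem (by rw [hy]; exact ⟨0, rfl⟩)
    obtain ⟨j, hj⟩ := Nat.find_spec hmem
    have hj' : X.f^[j] x = X.f^[Nat.find hmem] y := hj
    have h1 : X.f^[k + 1 - Nat.find hmem] (X.f^[Nat.find hmem] y) = x := by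
      rw [← Function.iterate_add_apply, Nat.sub_add_cancel hle]; exact hy
    have h2 : X.f^[(k + 1 - Nat.find hmem) + j] x = x := by
      rw [Function.iterate_add_apply, hj']; exact h1
    have h3 : (k + 1 - Nat.find hmem) + j = 0 := by
      by_contra h
      exact hnp _ (Nat.pos_of_ne_zero h) h2
    have : Nat.find hmem = k + 1 := by omega
    exact ⟨y, by rw [hgy, this]⟩
  -- compactness contradiction via the pred-telescope
  have hcol : IsColimit ((coyoneda.obj (op X)).mapCocone predCocone) :=
    isColimitOfPreserves _ predIsColimit
  let gh : X ⟶ predDiag.obj 0 := ⟨g, hgeq⟩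
  let zh : X ⟶ predDiag.obj 0 := ⟨fun _ => (0 : ℕ), fun _ => rfl⟩
  have hsing : ∀ a b : X ⟶ ptObj, a = b := fun a b => Subsingleton.elim a b
  have heq : ((coyoneda.obj (op X)).mapCocone predCocone).ι.app 0 gh
      = ((coyoneda.obj (op X)).mapCocone predCocone).ι.app 0 zh := hsing _ _
  obtain ⟨k, u, v, huv⟩ :=
    (Types.FilteredColimit.isColimit_eq_iff (predDiag ⋙ coyoneda.obj (op X)) hcol).mp heq
  rw [Subsingleton.elim u (homOfLE (Nat.zero_le k)),
    Subsingleton.elim v (homOfLE (Nat.zero_le k))] at huv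
  obtain ⟨y, hy⟩ := hub k
  have h2 : (fun z => (predDiag.map (homOfLE (Nat.zero_le k))).1 (g z))
      = (fun _ : X.carrier => (predDiag.map (homOfLE (Nat.zero_le k))).1 (0 : ℕ)) :=
    congrArg Subtype.val huv
  have h3 := congrFun h2 y
  rw [predDiag_map, hy, pred_iter, pred_iter] at h3
  have : k + 1 - k = (1:ℕ) := by omega
  rw [this, Nat.zero_sub] at h3
  exact Nat.one_ne_zero h3

end Main

lemma ints_iter (n : ℕ) (m : ℤ) : ints.f^[n] m = m + (n : ℤ) := by
  induction n with
  | zero => show m = m + ((0 : ℕ) : ℤ); simp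
  | succ n ih =>
      rw [Function.iterate_succ_apply' ints.f n m, ih]
      show (m + (n : ℤ)) + 1 = m + (((n + 1 : ℕ)) : ℤ)
      push_cast
      ring

/-- The category of sets with a surjective self-map has all filtered colimits, computed
on underlying sets; the object `(ℤ, +1)` is not compact, and it is not isomorphic to the
colimit of any filtered diagram of compact objects.  (An object `X` is *compact* if
`Hom(X, -)` preserves filtered colimits.) -/
theorem ints_not_filtered_colimit_of_compacts :
    HasFilteredColimits SurjSelfMap ∧
    PreservesFilteredColimits forget ∧
    ¬ PreservesFilteredColimits (coyoneda.obj (op ints)) ∧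
    (∀ (J : Type) [SmallCategory J] [IsFiltered J] (K : J ⥤ SurjSelfMap),
      (∀ j, PreservesFilteredColimits (coyoneda.obj (op (K.obj j)))) →
      ∀ (c : Cocone K), IsColimit c → IsEmpty (c.pt ≅ ints)) := by
  refine ⟨inferInstance, inferInstance, ?_, ?_⟩
  · intro h
    have hsh : PreservesColimitsOfShape ℕ (coyoneda.obj (op ints)) :=
      h.preserves_filtered_colimits ℕ
    obtain ⟨p, hp, hper⟩ := periodic_of_compact ints hsh (0 : ℤ)
    rw [ints_iter] at hper
    have hper' : (0 : ℤ) + (p : ℤ) = 0 := hper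
    omega
  · intro J _ _ K hK c hc
    constructor
    intro φ
    have hc' : IsColimit (forget.mapCocone c) := isColimitOfPreserves forget hc
    obtain ⟨j, y, hy⟩ := Types.jointly_surjective (K ⋙ forget) hc' (φ.inv.1 (0 : ℤ))
    have hsh : PreservesColimitsOfShape ℕ (coyoneda.obj (op (K.obj j))) :=
      (hK j).preserves_filtered_colimits ℕ
    obtain ⟨p, hp, hper⟩ := periodic_of_compact (K.obj j) hsh y
    have h1 : (c.ι.app j).1 ((K.obj j).f^[p] y) = c.pt.f^[p] ((c.ι.app j).1 y) :=
      iterate_comm (c.ι.app j) p y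
    have hy' : (c.ι.app j).1 y = φ.inv.1 (0 : ℤ) := by exact hy
    have h2 : c.pt.f^[p] (φ.inv.1 (0 : ℤ)) = φ.inv.1 (0 : ℤ) := by
      rw [← hy', ← h1, hper]
    have h3 := congrArg φ.hom.1 h2
    rw [iterate_comm φ.hom p] at h3
    have h4 : φ.hom.1 (φ.inv.1 (0 : ℤ)) = (0 : ℤ) :=
      congrFun (congrArg Subtype.val φ.inv_hom_id) (0 : ℤ)
    rw [h4] at h3
    rw [ints_iter] at h3
    have h3' : (0 : ℤ) + (p : ℤ) = 0 := h3
    omega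


end SurjSelfMap
end

section
/- Consider the category of towers of sets ⋯ → A₂ → A₁ → A₀ (i.e. functors from the opposite of the poset ℕ to Set), and its full subcategory consisting of those towers in which every transition map A_{n+1} → A_n is surjective. This subcategory is closed under filtered colimits (computed levelwise), and every object of it in which some (equivalently, every) A_n is nonempty fails to be compact; that is, the only compact object of this subcategory is the empty tower (⋯ → ∅ → ∅ → ∅). -/
open CategoryTheory CategoryTheory.Limits Opposite

/-- A tower of sets `⋯ → A₂ → A₁ → A₀` (a functor `ℕᵒᵖ ⥤ Type`) has surjective
transitions if every map `A_{n+1} → A_n` is surjective. -/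
def SurjTower (T : ℕᵒᵖ ⥤ Type) : Prop :=
  ∀ n : ℕ, Function.Surjective (T.map (homOfLE (Nat.le_succ n)).op)

/-- Truncated bool: keep `b` only above threshold `m`. -/
def tb (m n : ℕ) (b : Bool) : Bool := if m < n then b else false

lemma tb_tb_le {m n n' : ℕ} (h : n' ≤ n) (b : Bool) : tb m n' (tb m n b) = tb m n' b := by
  unfold tb
  by_cases h1 : m < n'
  · rw [if_pos h1, if_pos h1, if_pos (lt_of_lt_of_le h1 h)]
  · rw [if_neg h1, if_neg h1]

lemma tb_tb_le' {m m' n : ℕ} (h : m ≤ m') (b : Bool) : tb m' n (tb m n b) = tb m' n b := by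
  unfold tb
  by_cases h1 : m' < n
  · rw [if_pos h1, if_pos h1, if_pos (lt_of_le_of_lt h h1)]
  · rw [if_neg h1, if_neg h1]

lemma tb_eq_of_mem {m n : ℕ} {b : Bool} (h : m < n ∨ b = false) : tb m n b = b := by
  unfold tb
  rcases h with h | h
  · rw [if_pos h]
  · subst h; simp

lemma tb_mem {m n : ℕ} (b : Bool) : m < n ∨ tb m n b = false := by
  unfold tb
  by_cases h : m < n
  · exact Or.inl h
  · exact Or.inr (if_neg h)

/-- Tower obtained from `A` by doubling all levels above `m` (via a Bool marker that is
killed at levels `≤ m`). -/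
def Ldiag (A : ℕᵒᵖ ⥤ Type) (m : ℕ) : ℕᵒᵖ ⥤ Type where
  obj x := { p : A.obj x × Bool // m < x.unop ∨ p.2 = false }
  map {x y} f := TypeCat.ofHom fun p => ⟨(A.map f p.1.1, tb m y.unop p.1.2), tb_mem _⟩
  map_id x := by
    refine ConcreteCategory.hom_ext _ _ fun p => ?_
    apply Subtype.ext
    dsimp
    rw [FunctorToTypes.map_id_apply, tb_eq_of_mem p.2]
  map_comp {x y z} f g := by
    refine ConcreteCategory.hom_ext _ _ fun p => ?_
    apply Subtype.ext
    dsimp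
    rw [FunctorToTypes.map_comp_apply, tb_tb_le (leOfHom g.unop)]

lemma Ldiag_surj (A : ℕᵒᵖ ⥤ Type) (hA : SurjTower A) (m : ℕ) : SurjTower (Ldiag A m) := by
  intro n q
  obtain ⟨⟨a', b'⟩, hb⟩ := q
  obtain ⟨a, ha⟩ := hA n a'
  refine ⟨⟨(a, tb m n b'), ?_⟩, ?_⟩
  · rcases tb_mem (m := m) (n := n) b' with h | h
    · exact Or.inl (Nat.lt_succ_of_lt h)
    · exact Or.inr h
  · apply Subtype.ext
    show (A.map _ a, tb m n (tb m n b')) = (a', b')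
    rw [ha, tb_tb_le (le_refl n), tb_eq_of_mem hb]

/-- The filtered (sequential) diagram of towers `Ldiag A m`, `m : ℕ`. -/
def Kdiag (A : ℕᵒᵖ ⥤ Type) : ℕ ⥤ (ℕᵒᵖ ⥤ Type) where
  obj m := Ldiag A m
  map {m m'} _ :=
    { app := fun x => TypeCat.ofHom fun p => ⟨(p.1.1, tb m' x.unop p.1.2), tb_mem _⟩
      naturality := by
        intro x y f
        ext p
        apply Subtype.ext
        show (A.map f p.1.1, tb m' y.unop (tb m y.unop p.1.2))
            = (A.map f p.1.1, tb m' y.unop (tb m' x.unop p.1.2))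
        rw [tb_tb_le' (leOfHom ‹m ⟶ m'›), tb_tb_le (leOfHom f.unop)] }
  map_id m := by
    apply NatTrans.ext
    funext x
    ext p
    apply Subtype.ext
    show (p.1.1, tb m x.unop p.1.2) = p.1
    rw [tb_eq_of_mem p.2]
  map_comp {m m' m''} f g := by
    apply NatTrans.ext
    funext x
    ext p
    apply Subtype.ext
    show (p.1.1, tb m'' x.unop p.1.2) = (p.1.1, tb m'' x.unop (tb m' x.unop p.1.2))
    rw [tb_tb_le' (leOfHom g)]

lemma surjTower_closed (J : Type) [SmallCategory J] (K : J ⥤ (ℕᵒᵖ ⥤ Type))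
    (hK : ∀ j, SurjTower (K.obj j)) : SurjTower (colimit K) := by
  intro n y
  obtain ⟨j, x, rfl⟩ := CategoryTheory.FunctorToTypes.jointly_surjective' K (op n) y
  obtain ⟨x', hx'⟩ := hK j n x
  exact ⟨(colimit.ι K j).app (op (n + 1)) x', by
    rw [CategoryTheory.FunctorToTypes.colimit.map_ι_apply, hx']⟩

/-- The full subcategory of towers of sets with surjective transition maps is closed under
filtered colimits (computed levelwise, i.e. in the functor category), and every one of its
objects with some nonempty level fails to be compact; that is, the only compact object of
this subcategory is the empty tower.  (An object `X` is *compact* if `Hom(X, -)`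
preserves filtered colimits.) -/
theorem surjTower_closed_under_filtered_colimits_and_no_nonempty_compacts :
    (∀ (J : Type) [SmallCategory J] [IsFiltered J] (K : J ⥤ (ℕᵒᵖ ⥤ Type)),
      (∀ j, SurjTower (K.obj j)) → SurjTower (colimit K)) ∧
    (∀ T : ObjectProperty.FullSubcategory SurjTower,
      (∃ n : ℕ, Nonempty (T.obj.obj (op n))) →
      ¬ PreservesFilteredColimits (coyoneda.obj (op T))) ∧
    (∀ T : ObjectProperty.FullSubcategory SurjTower,
      PreservesFilteredColimits (coyoneda.obj (op T)) →
      ∀ n : ℕ, IsEmpty (T.obj.obj (op n))) := by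
  have part2 : ∀ T : ObjectProperty.FullSubcategory SurjTower,
      (∃ n : ℕ, Nonempty (T.obj.obj (op n))) →
      ¬ PreservesFilteredColimits (coyoneda.obj (op T)) := by
    intro T hT hP
    obtain ⟨n0, ⟨a0⟩⟩ := hT
    set A := T.obj with hAdef
    have hA : SurjTower A := T.property
    -- all levels are nonempty
    have hne : ∀ n, Nonempty (A.obj (op n)) := by
      intro n
      induction n with
      | zero => exact ⟨A.map (homOfLE (Nat.zero_le n0)).op a0⟩
      | succ k ih =>
        obtain ⟨a⟩ := ih
        obtain ⟨a', _⟩ := hA k a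
        exact ⟨a'⟩
    -- the diagram in the full subcategory
    let KS : ℕ ⥤ ObjectProperty.FullSubcategory SurjTower :=
      ObjectProperty.lift SurjTower (Kdiag A) (fun m => Ldiag_surj A hA m)
    -- the colimit cocone
    have hD : SurjTower (colimit (Kdiag A)) :=
      surjTower_closed ℕ (Kdiag A) (fun m => Ldiag_surj A hA m)
    let c : Cocone KS :=
      { pt := ⟨colimit (Kdiag A), hD⟩
        ι :=
          { app := fun m => ObjectProperty.homMk (colimit.ι (Kdiag A) m : (Kdiag A).obj m ⟶ colimit (Kdiag A))
            naturality := fun m m' u => by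
              apply ObjectProperty.hom_ext
              show (Kdiag A).map u ≫ colimit.ι (Kdiag A) m' = colimit.ι (Kdiag A) m ≫ 𝟙 _
              rw [Category.comp_id]
              exact colimit.w (Kdiag A) u } }
    let mk : Cocone KS → Cocone (Kdiag A) := fun s =>
      { pt := s.pt.obj
        ι :=
          { app := fun m => ((s.ι.app m).hom : (Kdiag A).obj m ⟶ s.pt.obj)
            naturality := fun m m' u => congrArg (·.hom) (s.ι.naturality u) } }
    have hc : IsColimit c :=
      { desc := fun s => ObjectProperty.homMk (colimit.desc (Kdiag A) (mk s))
        fac := fun s m => by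
          apply ObjectProperty.hom_ext
          show colimit.ι (Kdiag A) m ≫ colimit.desc (Kdiag A) (mk s) = (mk s).ι.app m
          exact colimit.ι_desc _ m
        uniq := fun s f hf => ObjectProperty.hom_ext _ (
          colimit.hom_ext (F := Kdiag A) (X := s.pt.obj) (f := f.hom)
            (f' := colimit.desc (Kdiag A) (mk s))
            (fun j => by rw [colimit.ι_desc]; exact congrArg (·.hom) (hf j))) }
    have hc2 : IsColimit ((coyoneda.obj (op T)).mapCocone c) :=
      isColimitOfPreserves (coyoneda.obj (op T)) hc
    -- the two morphisms T ⟶ KS.obj 0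
    let f : T ⟶ KS.obj 0 := ObjectProperty.homMk
      { app := fun x => TypeCat.ofHom fun a => ⟨(a, false), Or.inr rfl⟩
        naturality := fun x y u => by
          ext a
          apply Subtype.ext
          show (A.map u a, false) = (A.map u a, tb 0 y.unop false)
          simp [tb] }
    let g : T ⟶ KS.obj 0 := ObjectProperty.homMk
      { app := fun x => TypeCat.ofHom fun a => ⟨(a, decide (0 < x.unop)), by
          by_cases h : 0 < x.unop
          · exact Or.inl h
          · exact Or.inr (by simpa using h)⟩
        naturality := fun x y u => by
          ext a
          apply Subtype.ext
          show (A.map u a, decide (0 < y.unop))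
              = (A.map u a, tb 0 y.unop (decide (0 < x.unop)))
          unfold tb
          by_cases h : 0 < y.unop
          · rw [if_pos h]
            simp [h, lt_of_lt_of_le h (leOfHom u.unop)]
          · rw [if_neg h]
            simp [h] }
    -- the two morphisms agree after composing into the colimit
    have key1 : f ≫ c.ι.app 0 = g ≫ c.ι.app 0 := by
      apply ObjectProperty.hom_ext
      apply NatTrans.ext
      funext x
      ext a
      show (colimit.ι (Kdiag A) 0).app x (f.hom.app x a)
          = (colimit.ι (Kdiag A) 0).app x (g.hom.app x a)
      have w := colimit.w (Kdiag A) (homOfLE (Nat.zero_le x.unop))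
      have e1 : ∀ p : (Ldiag A 0).obj x,
          (colimit.ι (Kdiag A) 0).app x p
            = (colimit.ι (Kdiag A) x.unop).app x
                (((Kdiag A).map (homOfLE (Nat.zero_le x.unop))).app x p) := by
        intro p
        exact (ConcreteCategory.congr_hom (NatTrans.congr_app w x) p).symm
      have e2 : ((Kdiag A).map (homOfLE (Nat.zero_le x.unop))).app x (f.hom.app x a)
          = ((Kdiag A).map (homOfLE (Nat.zero_le x.unop))).app x (g.hom.app x a) := by
        apply Subtype.ext
        show (a, tb x.unop x.unop false) = (a, tb x.unop x.unop (decide (0 < x.unop)))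
        simp [tb]
      exact (e1 _).trans ((congrArg _ e2).trans (e1 _).symm)
    have key2 : ((coyoneda.obj (op T)).mapCocone c).ι.app 0 f
        = ((coyoneda.obj (op T)).mapCocone c).ι.app 0 g := by
      show f ≫ c.ι.app 0 = g ≫ c.ι.app 0
      exact key1
    obtain ⟨k, u, v, huv⟩ :=
      (Types.FilteredColimit.isColimit_eq_iff _ hc2).mp key2
    obtain rfl : u = v := Subsingleton.elim u v
    have huv' : f ≫ KS.map u = g ≫ KS.map u := huv
    obtain ⟨a⟩ := hne (k + 1)
    have hx := ConcreteCategory.congr_hom (NatTrans.congr_app (congrArg (·.hom) huv') (op (k + 1))) a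
    have hb2 : tb k (k + 1) false = tb k (k + 1) (decide (0 < k + 1)) :=
      congrArg Prod.snd (Subtype.ext_iff.mp hx)
    have hb : (false : Bool) = true := by simpa [tb] using hb2
    exact absurd hb (by simp)
  refine ⟨fun J _ _ K hK => surjTower_closed J K hK, part2, ?_⟩
  intro T hP n
  by_contra h
  rw [not_isEmpty_iff] at h
  exact part2 T ⟨n, h⟩ hP
end
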